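/- arXiv:1103.1057 — 5 statements merged into one kernel-verified Lean document; each statement's English description precedes it below -/
import Mathlib

section
/- Let H = (V, E) be a hypergraph with Bip H connected and let f : E → ℕ be a hypertree. For any collection of edges α_e of Bip H, one for each e ∈ E, such that α_e is adjacent to e, there exists a spanning tree of Bip H realizing f that contains α_e for every e ∈ E. -/
open SimpleGraph Finset
open scoped Classical

noncomputable section

variable {α β : Type} [DecidableEq α] [DecidableEq β]

/-- A hypergraph: a finite set `V` of vertices, a finite (index) set `E` of hyperedges,
where the hyperedge indexed by `e ∈ E` is the nonempty set `incid e ⊆ V` of its vertices.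
(Indexing hyperedges by a type allows multiset multiplicities, as in the paper.) -/
structure Hypergraph' (α β : Type) where
  V : Finset α
  E : Finset β
  incid : β → Finset α
  incid_sub : ∀ e ∈ E, incid e ⊆ V
  incid_nonempty : ∀ e ∈ E, (incid e).Nonempty

/-- The degree (valence) of a vertex in a graph. -/
def degr {W : Type} (T : SimpleGraph W) (x : W) : ℕ := (T.neighborSet x).ncard

/-- Nullity (first Betti number) of a graph: #edges − #vertices + #components. -/
def nullity {W : Type} (G : SimpleGraph W) : ℕ :=
  G.edgeSet.ncard + Nat.card G.ConnectedComponent - Nat.card W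

/-- The result of transferring one unit of valence from `a` to `b`. -/
def transferFun (f : β → ℕ) (a b : β) : β → ℕ :=
  fun x => if x = a then f a - 1 else if x = b then f b + 1 else f x

namespace Hypergraph'

variable (H : Hypergraph' α β)

/-- The bipartite graph associated to a hypergraph: color classes `V` and `E`,
with `v` joined to `e` iff `v ∈ incid e`. -/
def Bip : SimpleGraph (↥H.V ⊕ ↥H.E) :=
  SimpleGraph.fromRel (fun x y =>
    ∃ (v : ↥H.V) (e : ↥H.E), x = Sum.inl v ∧ y = Sum.inr e ∧ (v : α) ∈ H.incid (e : β))

/-- A spanning tree of the associated bipartite graph. -/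
def IsSpanningTree (T : SimpleGraph (↥H.V ⊕ ↥H.E)) : Prop :=
  T ≤ H.Bip ∧ T.IsTree

/-- `T` is a spanning tree of `Bip H` realizing the vector `f` (a function on the
hyperedges, encoded as a function on `β` vanishing off `E`): `T` has degree
`f e + 1` at each hyperedge `e`. -/
def Realizes (T : SimpleGraph (↥H.V ⊕ ↥H.E)) (f : β → ℕ) : Prop :=
  H.IsSpanningTree T ∧ (∀ e, e ∉ H.E → f e = 0) ∧
    ∀ e : ↥H.E, degr T (Sum.inr e) = f (e : β) + 1

/-- A hypertree is a vector realized by some spanning tree of `Bip H`. -/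
def IsHypertree (f : β → ℕ) : Prop := ∃ T, H.Realizes T f

/-- The bipartite graph `Bip H |_{E'}` induced by a subset `E'` of hyperedges:
color classes `∪E'` and `E'`. -/
def BipOn (E' : Finset β) : SimpleGraph (↥(E'.biUnion H.incid) ⊕ ↥E') :=
  SimpleGraph.fromRel (fun x y =>
    ∃ (v : ↥(E'.biUnion H.incid)) (e : ↥E'),
      x = Sum.inl v ∧ y = Sum.inr e ∧ (v : α) ∈ H.incid (e : β))

/-- `c(E')`: the number of connected components of `Bip H |_{E'}`. -/
def compCount (E' : Finset β) : ℕ := Nat.card (H.BipOn E').ConnectedComponent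

/-- `μ(E') = |∪E'| − c(E')` (and `μ(∅) = 0`). -/
def mu (E' : Finset β) : ℤ :=
  ((E'.biUnion H.incid).card : ℤ) - (H.compCount E' : ℤ)

/-- `f` is such that a transfer of valence is possible from `a` to `b`. -/
def TransferPossible (f : β → ℕ) (a b : β) : Prop :=
  0 < f a ∧ H.IsHypertree (transferFun f a b)

/-- `e` is internally active w.r.t. the hypertree `f` and the order `o`. -/
def InternallyActive (o : LinearOrder β) (f : β → ℕ) (e : β) : Prop :=
  ∀ x ∈ H.E, o.lt x e → ¬ H.TransferPossible f e x

/-- `e` is externally active w.r.t. the hypertree `f` and the order `o`. -/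
def ExternallyActive (o : LinearOrder β) (f : β → ℕ) (e : β) : Prop :=
  ∀ x ∈ H.E, o.lt x e → ¬ H.TransferPossible f x e

/-- `ῑ(f)`: the number of internally inactive hyperedges w.r.t. `f`. -/
def intInact (o : LinearOrder β) (f : β → ℕ) : ℕ :=
  (H.E.filter (fun e => ¬ H.InternallyActive o f e)).card

/-- `ε̄(f)`: the number of externally inactive hyperedges w.r.t. `f`. -/
def extInact (o : LinearOrder β) (f : β → ℕ) : ℕ :=
  (H.E.filter (fun e => ¬ H.ExternallyActive o f e)).card

end Hypergraph'

section Exchange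

open SimpleGraph Walk

/-- Tree edge exchange: if `T` is a tree, `x ≠ y` and `x, y` are not adjacent in `T`,
then there is a neighbor `z` of `y` such that replacing the edge `yz` by `xy`
yields again a tree. -/
lemma tree_exchange {W : Type} [DecidableEq W] {T : SimpleGraph W} (hT : T.IsTree)
    {x y : W} (hxy : x ≠ y) (hnadj : ¬ T.Adj x y) :
    ∃ z, T.Adj y z ∧
      (T.deleteEdges {s(y, z)} ⊔ SimpleGraph.fromEdgeSet {s(x, y)}).IsTree := by
  obtain ⟨r⟩ := hT.isConnected y x
  have hp : (r.toPath : T.Walk y x).IsPath := r.toPath.2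
  obtain ⟨z, hadj, q, heq⟩ := Walk.exists_eq_cons_of_ne hxy.symm (r.toPath : T.Walk y x)
  rw [heq, Walk.cons_isPath_iff] at hp
  obtain ⟨hqp, hys⟩ := hp
  set T' := T.deleteEdges {s(y, z)} ⊔ SimpleGraph.fromEdgeSet {s(x, y)} with hT'
  have hqe : ∀ e ∈ q.edges, e ∈ (T.deleteEdges {s(y, z)}).edgeSet := by
    intro e he
    rw [edgeSet_deleteEdges]
    refine ⟨q.edges_subset_edgeSet he, ?_⟩
    simp only [Set.mem_singleton_iff]
    rintro rfl
    exact hys (q.fst_mem_support_of_mem_edges he)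
  let q' : (T.deleteEdges {s(y, z)}).Walk z x := q.transfer _ hqe
  have hxy' : T'.Adj x y := by
    apply (sup_adj _ _ _ _).mpr
    right
    exact (fromEdgeSet_adj _).mpr ⟨rfl, hxy⟩
  have hzy' : T'.Reachable z y :=
    ((q'.mapLe le_sup_left).reachable).trans hxy'.reachable
  have hreach : ∀ a b, T.Adj a b → T'.Reachable a b := by
    intro a b hab
    by_cases h : s(a, b) = s(y, z)
    · rcases Sym2.eq_iff.mp h with ⟨rfl, rfl⟩ | ⟨rfl, rfl⟩
      · exact hzy'.symm
      · exact hzy'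
    · exact Adj.reachable (by
        apply (sup_adj _ _ _ _).mpr
        left
        exact deleteEdges_adj.mpr ⟨hab, by simpa using h⟩)
  have hconn' : T'.Connected := by
    rw [connected_iff]
    refine ⟨?_, hT.isConnected.nonempty⟩
    intro a b
    obtain ⟨w⟩ := hT.isConnected a b
    induction w with
    | nil => exact Reachable.refl _
    | cons h p ih => exact (hreach _ _ h).trans ih
  have hbridge : T'.IsBridge s(x, y) := by
    rw [isBridge_iff]
    rintro ⟨w⟩
    have hTbridge : T.IsBridge s(y, z) :=
      (isAcyclic_iff_forall_adj_isBridge.mp hT.IsAcyclic) hadj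
    rw [isBridge_iff] at hTbridge
    apply hTbridge
    have h1 : (T' \ SimpleGraph.fromEdgeSet {s(x, y)}) ≤ T.deleteEdges {s(y, z)} := by
      intro a b hab
      obtain ⟨hab1, hab2⟩ := hab
      rcases (sup_adj _ _ _ _).mp hab1 with h | h
      · exact h
      · exact absurd h hab2
    have w2 := w.mapLe h1
    have hzyreach : (T.deleteEdges {s(y, z)}).Reachable y z := ((q'.append w2).reverse).reachable
    exact hzyreach
  refine ⟨z, hadj, ⟨hconn', ?_⟩⟩
  intro v c hc
  by_cases hm : s(x, y) ∈ c.edges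
  · exact (isBridge_iff_mem_and_forall_cycle_notMem hxy').mp hbridge c hc hm
  · have hce : ∀ e ∈ c.edges, e ∈ T.edgeSet := by
      intro e he
      have h := c.edges_subset_edgeSet he
      rw [edgeSet_sup, edgeSet_deleteEdges, edgeSet_fromEdgeSet] at h
      rcases h with h | h
      · exact h.1
      · exact absurd (h.1 ▸ he) hm
    exact hT.IsAcyclic (c.transfer T hce) (hc.transfer hce)

end Exchange

/-- anchoring lemma: any prescribed collection of edges, one
adjacent to each hyperedge, is contained in some realization of a given hypertree. -/
theorem realization_through_prescribed_edges (H : Hypergraph' α β)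
    (hconn : H.Bip.Connected) (f : β → ℕ) (hf : H.IsHypertree f)
    (a : ↥H.E → ↥H.V) (ha : ∀ e : ↥H.E, (a e : α) ∈ H.incid (e : β)) :
    ∃ T : SimpleGraph (↥H.V ⊕ ↥H.E), H.Realizes T f ∧
      ∀ e : ↥H.E, T.Adj (Sum.inl (a e)) (Sum.inr e) := by
  classical
  obtain ⟨T0, hT0⟩ := hf
  suffices key : ∀ n (T : SimpleGraph (↥H.V ⊕ ↥H.E)), H.Realizes T f →
      (Finset.univ.filter fun e : ↥H.E => ¬ T.Adj (Sum.inl (a e)) (Sum.inr e)).card ≤ n →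
      ∃ T', H.Realizes T' f ∧ ∀ e : ↥H.E, T'.Adj (Sum.inl (a e)) (Sum.inr e) by
    exact key _ T0 hT0 le_rfl
  intro n
  induction n with
  | zero =>
    intro T hT hcard
    refine ⟨T, hT, fun e => ?_⟩
    by_contra h
    have hmem : e ∈ Finset.univ.filter fun e : ↥H.E =>
        ¬ T.Adj (Sum.inl (a e)) (Sum.inr e) := by simp [h]
    have := (Finset.card_pos.mpr ⟨e, hmem⟩).trans_le hcard
    omega
  | succ n ih =>
    intro T hT hcard
    by_cases hall : ∀ e : ↥H.E, T.Adj (Sum.inl (a e)) (Sum.inr e)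
    · exact ⟨T, hT, hall⟩
    push_neg at hall
    obtain ⟨e, he⟩ := hall
    have htree : T.IsTree := hT.1.2
    have hxyne : (Sum.inl (a e) : ↥H.V ⊕ ↥H.E) ≠ Sum.inr e := by simp
    obtain ⟨z, hadj, hT'tree⟩ := tree_exchange htree hxyne he
    have hzB : H.Bip.Adj (Sum.inr e) z := hT.1.1 hadj
    obtain ⟨v, rfl⟩ : ∃ v : ↥H.V, z = Sum.inl v := by
      rw [Hypergraph'.Bip, SimpleGraph.fromRel_adj] at hzB
      rcases hzB.2 with ⟨v', e', h1, h2, _⟩ | ⟨v', e', h1, h2, _⟩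
      · exact absurd h1 (by simp)
      · exact ⟨v', h1⟩
    set x : ↥H.V ⊕ ↥H.E := Sum.inl (a e) with hx
    set y : ↥H.V ⊕ ↥H.E := Sum.inr e with hy
    obtain ⟨T', hT'def⟩ : ∃ T', T' = T.deleteEdges {s(y, Sum.inl v)} ⊔
        SimpleGraph.fromEdgeSet {s(x, y)} := ⟨_, rfl⟩
    rw [← hT'def] at hT'tree
    have hT'adj : ∀ u w, T'.Adj u w ↔
        (T.Adj u w ∧ s(u, w) ≠ s(y, Sum.inl v)) ∨ (s(u, w) = s(x, y) ∧ u ≠ w) := by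
      intro u w
      rw [hT'def, SimpleGraph.sup_adj, SimpleGraph.deleteEdges_adj,
        SimpleGraph.fromEdgeSet_adj]
      simp [Set.mem_singleton_iff]
    have hBxy : H.Bip.Adj x y := by
      rw [Hypergraph'.Bip, SimpleGraph.fromRel_adj]
      exact ⟨hxyne, Or.inl ⟨a e, e, rfl, rfl, ha e⟩⟩
    have hle : T' ≤ H.Bip := by
      rw [hT'def]
      apply sup_le
      · exact le_trans (SimpleGraph.deleteEdges_le _) hT.1.1
      · intro u w huw
        rw [SimpleGraph.fromEdgeSet_adj] at huw
        rcases Sym2.eq_iff.mp (Set.mem_singleton_iff.mp huw.1) with ⟨rfl, rfl⟩ | ⟨rfl, rfl⟩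
        · exact hBxy
        · exact hBxy.symm
    have hvmem : Sum.inl v ∈ T.neighborSet y := hadj
    have hxmem : x ∉ T.neighborSet y := fun hh => he (SimpleGraph.Adj.symm hh)
    have hdeg : ∀ e' : ↥H.E, degr T' (Sum.inr e') = f (e' : β) + 1 := by
      intro e'
      by_cases he' : e' = e
      · subst he'
        have hset : T'.neighborSet y = (T.neighborSet y \ {Sum.inl v}) ∪ {x} := by
          ext w
          simp only [SimpleGraph.mem_neighborSet, hT'adj, Set.mem_union, Set.mem_diff,
            Set.mem_singleton_iff]
          constructor
          · rintro (⟨hadj2, hne⟩ | ⟨heq2, hne⟩)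
            · left
              refine ⟨hadj2, ?_⟩
              rintro rfl
              exact hne rfl
            · right
              rcases Sym2.eq_iff.mp heq2 with ⟨h1, h2⟩ | ⟨h1, h2⟩
              · exact absurd h1.symm hxyne
              · exact h2
          · rintro (⟨hadj2, hne⟩ | rfl)
            · left
              exact ⟨hadj2, fun hc => hne (Sym2.congr_right.mp hc)⟩
            · right
              exact ⟨Sym2.eq_swap, hxyne.symm⟩
        have hdeg1 : degr T' y = degr T y := by
          unfold degr
          show (T'.neighborSet y).ncard = (T.neighborSet y).ncard
          rw [hset]
          have hdisj : Disjoint (T.neighborSet y \ {Sum.inl v}) {x} := by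
            rw [Set.disjoint_singleton_right]
            simp only [Set.mem_diff, not_and]
            intro hc
            exact absurd hc hxmem
          rw [Set.ncard_union_eq hdisj (Set.toFinite _) (Set.toFinite _), Set.ncard_singleton,
            Set.ncard_diff_singleton_add_one hvmem (Set.toFinite _)]
        rw [hdeg1]
        exact hT.2.2 _
      · have hset : T'.neighborSet (Sum.inr e') = T.neighborSet (Sum.inr e') := by
          ext w
          simp only [SimpleGraph.mem_neighborSet, hT'adj]
          constructor
          · rintro (⟨h1, _⟩ | ⟨h1, _⟩)
            · exact h1
            · exfalso
              rcases Sym2.eq_iff.mp h1 with ⟨ha1, _⟩ | ⟨ha1, _⟩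
              · rw [hx] at ha1; exact absurd ha1 (by simp)
              · exact he' (Sum.inr.inj (hy ▸ ha1))
          · intro h1
            left
            refine ⟨h1, ?_⟩
            intro hc
            rcases Sym2.eq_iff.mp hc with ⟨ha1, _⟩ | ⟨ha1, _⟩
            · exact he' (Sum.inr.inj (hy ▸ ha1))
            · exact absurd ha1 (by simp)
        unfold degr
        show (T'.neighborSet (Sum.inr e')).ncard = f (e' : β) + 1
        rw [hset]
        exact hT.2.2 e'
    have hT'realizes : H.Realizes T' f := ⟨⟨hle, hT'tree⟩, hT.2.1, hdeg⟩
    have hemem : e ∈ Finset.univ.filter fun e : ↥H.E =>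
        ¬ T.Adj (Sum.inl (a e)) (Sum.inr e) := by simpa using he
    have hsub : (Finset.univ.filter fun e' : ↥H.E => ¬ T'.Adj (Sum.inl (a e')) (Sum.inr e'))
        ⊆ (Finset.univ.filter fun e' : ↥H.E =>
          ¬ T.Adj (Sum.inl (a e')) (Sum.inr e')).erase e := by
      intro e' he'mem
      rw [Finset.mem_filter] at he'mem
      rw [Finset.mem_erase, Finset.mem_filter]
      have hne : e' ≠ e := by
        rintro rfl
        exact he'mem.2 ((hT'adj _ _).mpr (Or.inr ⟨rfl, hxyne⟩))
      refine ⟨hne, Finset.mem_univ _, ?_⟩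
      intro hadj2
      apply he'mem.2
      apply (hT'adj _ _).mpr
      left
      refine ⟨hadj2, ?_⟩
      intro hc
      rcases Sym2.eq_iff.mp hc with ⟨ha1, _⟩ | ⟨_, hb1⟩
      · rw [hy] at ha1; exact absurd ha1 (by simp)
      · exact hne (Sum.inr.inj (hy ▸ hb1))
    have hcard' : (Finset.univ.filter fun e' : ↥H.E =>
        ¬ T'.Adj (Sum.inl (a e')) (Sum.inr e')).card ≤ n := by
      have h1 := Finset.card_le_card hsub
      rw [Finset.card_erase_of_mem hemem] at h1
      omega
    exact ih T' hT'realizes hcard'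
end
end

section
/- Let H = (V, E) be a hypergraph with Bip H connected. Suppose the integer vector f : E → ℕ satisfies f(e) ≥ 0 for all e ∈ E and Σ_{e∈E'} f(e) ≤ |∪E'| − c(E') for all non-empty subsets E' ⊆ E (including E' = E), but not necessarily Σ_{e∈E} f(e) = |V| − 1. Then there exists a cycle-free subgraph of Bip H that has valence f(e)+1 at every e ∈ E. -/
open SimpleGraph Finset
open scoped Classical

noncomputable section

variable {α β : Type} [DecidableEq α] [DecidableEq β]

section AuxLemmas

namespace CyclefreeAux

open SimpleGraph Walk

variable {W : Type}

lemma isAcyclic_mono {G G' : SimpleGraph W} (h : G ≤ G') (hH : G'.IsAcyclic) : G.IsAcyclic := by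
  intro v c hc
  exact hH (c.mapLe h) (by rwa [Walk.mapLe_isCycle])

lemma walk_sup_edge {G : SimpleGraph W} {a b : W} :
    ∀ {u y : W}, (G ⊔ SimpleGraph.edge a b).Walk u y →
      ∀ {x : W}, G.Reachable x u → ¬ G.Reachable x a → ¬ G.Reachable x b →
        G.Reachable x y := by
  intro u y w
  induction w with
  | nil => exact fun hxu _ _ => hxu
  | @cons u' v' y' h p ih =>
    intro x hxu hxa hxb
    rw [sup_adj] at h
    rcases h with h | h
    · exact ih (hxu.trans h.reachable) hxa hxb
    · rw [edge_adj] at h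
      rcases h.1 with ⟨rfl, rfl⟩ | ⟨rfl, rfl⟩
      · exact absurd hxu hxa
      · exact absurd hxu hxb

lemma reachable_sup_edge {G : SimpleGraph W} {a b x y : W}
    (ha : ¬ G.Reachable x a) (hb : ¬ G.Reachable x b)
    (h : (G ⊔ SimpleGraph.edge a b).Reachable x y) : G.Reachable x y := by
  obtain ⟨w⟩ := h
  exact walk_sup_edge w (Reachable.refl x) ha hb

lemma isAcyclic_sup_edge {G : SimpleGraph W} {a b : W} (hG : G.IsAcyclic)
    (hab : ¬ G.Reachable a b) : (G ⊔ SimpleGraph.edge a b).IsAcyclic := by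
  have hne : a ≠ b := fun h => hab (h ▸ Reachable.refl a)
  intro v c hc
  by_cases he : s(a, b) ∈ c.edges
  · have h2 := (adj_and_reachable_delete_edges_iff_exists_cycle.mpr ⟨v, c, hc, he⟩).2
    apply hab
    refine Reachable.mono ?_ h2
    intro x y hxy
    rw [deleteEdges_adj] at hxy
    obtain ⟨hxy1, hxy2⟩ := hxy
    rw [sup_adj] at hxy1
    rcases hxy1 with h1 | h1
    · exact h1
    · exfalso
      apply hxy2
      rw [edge_adj] at h1
      rw [Set.mem_singleton_iff]
      rcases h1.1 with ⟨rfl, rfl⟩ | ⟨rfl, rfl⟩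
      · simp
      · simp [Sym2.eq_swap]
  · have hsub : ∀ e ∈ c.edges, e ∈ G.edgeSet := by
      intro e hce
      have h1 : e ∈ (G ⊔ SimpleGraph.edge a b).edgeSet := c.edges_subset_edgeSet hce
      rw [edgeSet_sup, Set.mem_union, edge_edgeSet_of_ne hne] at h1
      rcases h1 with h1 | h1
      · exact h1
      · rw [Set.mem_singleton_iff] at h1
        exact absurd (h1 ▸ hce) he
    exact hG (c.transfer G hsub) (hc.transfer hsub)

lemma exists_two_neighbors_of_isCycle {G : SimpleGraph W} {v : W} {c : G.Walk v v}
    (hc : c.IsCycle) : ∃ x y, x ≠ y ∧ G.Adj v x ∧ G.Adj v y := by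
  cases c with
  | nil => exact absurd hc (by simp [Walk.isCycle_def])
  | @cons _ w _ h p =>
    rw [Walk.cons_isCycle_iff] at hc
    obtain ⟨hp, hedge⟩ := hc
    have hvw : v ≠ w := h.ne
    have hnn : ¬ p.reverse.Nil := Walk.not_nil_of_ne hvw
    obtain ⟨u, h', q, hq⟩ := Walk.not_nil_iff.mp hnn
    refine ⟨w, u, ?_, h, h'⟩
    intro huw
    apply hedge
    subst huw
    have : s(v, w) ∈ p.reverse.edges := by
      rw [hq]
      simp
    rwa [Walk.edges_reverse, List.mem_reverse] at this

lemma isAcyclic_of_side {G : SimpleGraph W} (P : W → Prop)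
    (hside : ∀ ⦃x y⦄, G.Adj x y → P x ∨ P y)
    (hdeg : ∀ x, P x → (G.neighborSet x).Subsingleton) : G.IsAcyclic := by
  classical
  intro v c hc
  have hnn : ¬ c.Nil := by
    intro hnil
    rw [Walk.nil_iff_length_eq] at hnil
    have := hc.three_le_length
    omega
  obtain ⟨x, hxs, hPx⟩ : ∃ x ∈ c.support, P x := by
    obtain ⟨u, h, q, rfl⟩ := Walk.not_nil_iff.mp hnn
    rcases hside h with h1 | h1
    · exact ⟨v, by simp, h1⟩
    · exact ⟨u, by simp, h1⟩
  have hc' := hc.rotate hxs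
  obtain ⟨a, b, hab, ha, hb⟩ := exists_two_neighbors_of_isCycle hc'
  exact hab (hdeg x hPx ha hb)

lemma sum_degree_side [Fintype W] [DecidableEq W] (G : SimpleGraph W)
    [DecidableRel G.Adj] (P : W → Prop) [DecidablePred P]
    (hside : ∀ ⦃x y⦄, G.Adj x y → (P x ↔ ¬ P y)) :
    ∑ v ∈ univ.filter P, G.degree v = G.edgeFinset.card := by
  have hA : ∑ v ∈ univ.filter P, G.degree v
      = (univ.filter (fun d : G.Dart => P d.fst)).card := by
    rw [card_eq_sum_card_fiberwise (f := fun d : G.Dart => d.fst)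
      (t := univ.filter P) (fun d hd => by
        simpa using hd)]
    refine sum_congr rfl fun v hv => ?_
    rw [mem_filter] at hv
    rw [← G.dart_fst_fiber_card_eq_degree v]
    congr 1
    ext d
    simp only [mem_filter, mem_univ, true_and]
    constructor
    · rintro rfl
      exact ⟨hv.2, rfl⟩
    · exact fun hh => hh.2
  have hB : (univ.filter (fun d : G.Dart => P d.fst)).card
      = (univ.filter (fun d : G.Dart => ¬ P d.fst)).card := by
    refine Finset.card_bij' (fun d _ => d.symm) (fun d _ => d.symm) ?_ ?_ ?_ ?_
    · intro d hd
      rw [mem_filter] at hd ⊢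
      refine ⟨mem_univ _, ?_⟩
      have := (hside d.adj).mp hd.2
      simpa using this
    · intro d hd
      rw [mem_filter] at hd ⊢
      refine ⟨mem_univ _, ?_⟩
      show P d.snd
      by_contra hnp
      exact hd.2 ((hside d.adj).mpr hnp)
    · intro d _; simp
    · intro d _; simp
  have hC : (univ.filter (fun d : G.Dart => P d.fst)).card
      + (univ.filter (fun d : G.Dart => ¬ P d.fst)).card = 2 * G.edgeFinset.card := by
    rw [Finset.card_filter_add_card_filter_not, card_univ,
      dart_card_eq_twice_card_edges]
  omega

lemma walk_induce {G : SimpleGraph W} {K : Set W}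
    (hcl : ∀ ⦃x y⦄, x ∈ K → G.Adj x y → y ∈ K) :
    ∀ {u v : W}, G.Walk u v → ∀ hu : u ∈ K, ∃ hv : v ∈ K,
      (G.induce K).Reachable ⟨u, hu⟩ ⟨v, hv⟩ := by
  intro u v w
  induction w with
  | nil => exact fun hu => ⟨hu, Reachable.refl _⟩
  | @cons u' v' y' h p ih =>
    intro hu
    have h2 : v' ∈ K := hcl hu h
    obtain ⟨hv, hr⟩ := ih h2
    refine ⟨hv, Reachable.trans ?_ hr⟩
    exact Adj.reachable (by exact h)

lemma sum_degr_reachable [Fintype W] [DecidableEq W] {G : SimpleGraph W}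
    (hG : G.IsAcyclic) (P : W → Prop)
    (hside : ∀ ⦃x y⦄, G.Adj x y → (P x ↔ ¬ P y)) (x0 : W)
    (A Kf : Finset W) (hAmem : ∀ x, x ∈ A ↔ (P x ∧ G.Reachable x0 x))
    (hKfmem : ∀ x, x ∈ Kf ↔ G.Reachable x0 x) :
    ∑ v ∈ A, degr G v + 1 = Kf.card := by
  classical
  have hAeq : A = univ.filter (fun v => P v ∧ G.Reachable x0 v) := by
    ext x
    rw [mem_filter, hAmem x]
    simp
  have hKfeq : Kf = univ.filter (fun v => G.Reachable x0 v) := by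
    ext x
    rw [mem_filter, hKfmem x]
    simp
  rw [hAeq, hKfeq]
  set K : Set W := {y | G.Reachable x0 y} with hK
  have hx0 : x0 ∈ K := Reachable.refl x0
  have hcl : ∀ ⦃x y⦄, x ∈ K → G.Adj x y → y ∈ K := fun x y hx h => hx.trans h.reachable
  set GK := G.induce K with hGK
  haveI : Nonempty ↥K := ⟨⟨x0, hx0⟩⟩
  have hconn : GK.Connected := by
    refine Connected.mk fun a b => ?_
    obtain ⟨u, hu⟩ := a
    obtain ⟨v, hv⟩ := b
    obtain ⟨w1⟩ := (hu : G.Reachable x0 u)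
    obtain ⟨w2⟩ := (hv : G.Reachable x0 v)
    obtain ⟨hu', r1⟩ := walk_induce hcl w1 hx0
    obtain ⟨hv', r2⟩ := walk_induce hcl w2 hx0
    exact r1.symm.trans r2
  have hacyc : GK.IsAcyclic := by
    intro v c hc
    have hinj : Function.Injective (fun x : ↥K => (x : W)) := Subtype.val_injective
    let F : GK →g G := ⟨fun x => (x : W), fun {a b} h => h⟩
    exact hG (c.map F) (hc.map hinj)
  have htree : GK.IsTree := ⟨hconn, hacyc⟩
  have hcount := htree.card_edgeFinset
  have hsideK : ∀ ⦃a b : ↥K⦄, GK.Adj a b →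
      ((fun z : ↥K => P z.val) a ↔ ¬ (fun z : ↥K => P z.val) b) :=
    fun a b h => hside h
  have hsum := sum_degree_side GK (fun z : ↥K => P z.val) hsideK
  have hdeg : ∀ z : ↥K, GK.degree z = degr G z.val := by
    intro z
    have himg : G.neighborSet z.val = (fun x : ↥K => (x : W)) '' (GK.neighborSet z) := by
      ext y
      simp only [mem_neighborSet, Set.mem_image]
      constructor
      · intro hy
        exact ⟨⟨y, hcl z.prop hy⟩, hy, rfl⟩
      · rintro ⟨w, hw, rfl⟩
        exact hw
    rw [degr, himg, Set.ncard_image_of_injective _ Subtype.val_injective,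
      ← card_neighborSet_eq_degree, Set.ncard_eq_toFinset_card', Set.toFinset_card]
  have hbij : ∑ z ∈ univ.filter (fun z : ↥K => P z.val), degr G z.val
      = ∑ v ∈ univ.filter (fun v => P v ∧ G.Reachable x0 v), degr G v := by
    refine Finset.sum_bij (fun (z : ↥K) _ => z.val) ?_ ?_ ?_ ?_
    · intro z hz
      rw [mem_filter] at hz ⊢
      exact ⟨mem_univ _, hz.2, z.prop⟩
    · intro z1 _ z2 _ h
      exact Subtype.ext h
    · intro v hv
      rw [mem_filter] at hv
      exact ⟨⟨v, hv.2.2⟩, by rw [mem_filter]; exact ⟨mem_univ _, hv.2.1⟩, rfl⟩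
    · intro z _
      rfl
  have hcardK : Fintype.card ↥K = (univ.filter (fun v => G.Reachable x0 v)).card := by
    rw [← Set.toFinset_card]
    congr 1
    ext v
    simp [hK]
  have hsum2 : ∑ z ∈ univ.filter (fun z : ↥K => P z.val), GK.degree z
      = ∑ z ∈ univ.filter (fun z : ↥K => P z.val), degr G z.val :=
    sum_congr rfl fun z _ => hdeg z
  rw [← hbij, ← hsum2, hsum, hcount, hcardK]

lemma neighborSet_sup_edge_of_ne {G : SimpleGraph W} {a b x : W}
    (hxa : x ≠ a) (hxb : x ≠ b) :
    (G ⊔ SimpleGraph.edge a b).neighborSet x = G.neighborSet x := by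
  ext y
  simp only [mem_neighborSet, sup_adj, edge_adj]
  constructor
  · rintro (h | ⟨(⟨rfl, rfl⟩ | ⟨rfl, rfl⟩), -⟩)
    · exact h
    · exact absurd rfl hxa
    · exact absurd rfl hxb
  · exact fun h => Or.inl h

lemma neighborSet_sup_edge_self {G : SimpleGraph W} {a b : W} (hne : a ≠ b) :
    (G ⊔ SimpleGraph.edge a b).neighborSet b = insert a (G.neighborSet b) := by
  ext y
  rw [Set.mem_insert_iff]
  show (G ⊔ SimpleGraph.edge a b).Adj b y ↔ y = a ∨ G.Adj b y
  rw [sup_adj, edge_adj]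
  constructor
  · rintro (h | ⟨(⟨rfl, -⟩ | ⟨-, rfl⟩), hne2⟩)
    · exact Or.inr h
    · exact absurd rfl hne
    · exact Or.inl rfl
  · rintro (rfl | h)
    · exact Or.inr ⟨Or.inr ⟨rfl, rfl⟩, hne.symm⟩
    · exact Or.inl h

lemma neighborSet_deleteEdges_self {G : SimpleGraph W} {c d : W} :
    (G.deleteEdges {s(c, d)}).neighborSet c = G.neighborSet c \ {d} := by
  ext y
  simp only [mem_neighborSet, deleteEdges_adj, Set.mem_diff, Set.mem_singleton_iff]
  constructor
  · rintro ⟨h1, h2⟩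
    refine ⟨h1, fun hyd => h2 ?_⟩
    rw [hyd]
  · rintro ⟨h1, h2⟩
    refine ⟨h1, fun hmem => ?_⟩
    rw [Sym2.congr_right] at hmem
    exact h2 hmem

lemma neighborSet_deleteEdges_of_ne {G : SimpleGraph W} {c d x : W}
    (hxc : x ≠ c) (hxd : x ≠ d) :
    (G.deleteEdges {s(c, d)}).neighborSet x = G.neighborSet x := by
  ext y
  simp only [mem_neighborSet, deleteEdges_adj]
  constructor
  · exact fun h => h.1
  · intro h
    refine ⟨h, fun hmem => ?_⟩
    simp only [Set.mem_singleton_iff, Sym2.eq_iff] at hmem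
    rcases hmem with ⟨rfl, rfl⟩ | ⟨rfl, rfl⟩
    · exact hxc rfl
    · exact hxd rfl

end CyclefreeAux

lemma Hypergraph'.bip_adj_cases (H : Hypergraph' α β) {x y : ↥H.V ⊕ ↥H.E}
    (h : H.Bip.Adj x y) :
    (∃ (v : ↥H.V) (e : ↥H.E), (v : α) ∈ H.incid (e : β) ∧ x = Sum.inl v ∧ y = Sum.inr e) ∨
    (∃ (v : ↥H.V) (e : ↥H.E), (v : α) ∈ H.incid (e : β) ∧ x = Sum.inr e ∧ y = Sum.inl v) := by
  rw [Hypergraph'.Bip, fromRel_adj] at h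
  obtain ⟨-, h | h⟩ := h
  · obtain ⟨v, e, h1, h2, h3⟩ := h
    exact Or.inl ⟨v, e, h3, h1, h2⟩
  · obtain ⟨v, e, h1, h2, h3⟩ := h
    exact Or.inr ⟨v, e, h3, h2, h1⟩

end AuxLemmas

set_option maxHeartbeats 1600000 in
/-- a vector satisfying the nonnegativity and submodular upper-bound
conditions (but not necessarily the total-sum condition) is realized by a cycle-free
subgraph of `Bip H` with valence `f e + 1` at every hyperedge `e`. -/
theorem cyclefree_realization (H : Hypergraph' α β) (hconn : H.Bip.Connected)
    (f : β → ℕ) (hf0 : ∀ e, e ∉ H.E → f e = 0)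
    (h1 : ∀ e ∈ H.E, 0 ≤ f e)
    (h2 : ∀ E' : Finset β, E' ⊆ H.E → E'.Nonempty →
      (∑ e ∈ E', (f e : ℤ)) ≤ H.mu E') :
    ∃ P : SimpleGraph (↥H.V ⊕ ↥H.E), P ≤ H.Bip ∧ P.IsAcyclic ∧
      ∀ e : ↥H.E, degr P (Sum.inr e) = f (e : β) + 1 := by
  classical
  open CyclefreeAux in
  clear h1
  -- the star construction, used when `f` vanishes on `H.E`
  have star : ∀ g : β → ℕ, (∀ e ∈ H.E, g e = 0) →
      ∃ P : SimpleGraph (↥H.V ⊕ ↥H.E), P ≤ H.Bip ∧ P.IsAcyclic ∧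
        ∀ e : ↥H.E, degr P (Sum.inr e) = g (e : β) + 1 := by
    intro g hz
    have hex : ∀ e : ↥H.E, ∃ v, v ∈ H.incid e.val := fun e => H.incid_nonempty _ e.prop
    choose gv hgv using hex
    set vm : ↥H.E → ↥H.V := fun e => ⟨gv e, H.incid_sub e.val e.prop (hgv e)⟩ with hvm
    set Pst : SimpleGraph (↥H.V ⊕ ↥H.E) :=
      SimpleGraph.fromRel (fun x y => ∃ e : ↥H.E, x = Sum.inl (vm e) ∧ y = Sum.inr e) with hPst
    have hle : Pst ≤ H.Bip := by
      intro x y h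
      rw [hPst, SimpleGraph.fromRel_adj] at h
      rw [Hypergraph'.Bip, SimpleGraph.fromRel_adj]
      obtain ⟨hne, h | h⟩ := h
      · obtain ⟨e, rfl, rfl⟩ := h
        exact ⟨hne, Or.inl ⟨vm e, e, rfl, rfl, hgv e⟩⟩
      · obtain ⟨e, rfl, rfl⟩ := h
        exact ⟨hne, Or.inr ⟨vm e, e, rfl, rfl, hgv e⟩⟩
    have hnbhd : ∀ e : ↥H.E, Pst.neighborSet (Sum.inr e) = {Sum.inl (vm e)} := by
      intro e
      ext x
      rw [SimpleGraph.mem_neighborSet, Set.mem_singleton_iff, hPst, SimpleGraph.fromRel_adj]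
      constructor
      · rintro ⟨hne, ⟨e', h1, h2⟩ | ⟨e', h1, h2⟩⟩
        · exact absurd h1 (by simp)
        · obtain rfl : e' = e := Sum.inr_injective h2.symm
          exact h1
      · rintro rfl
        exact ⟨by simp, Or.inr ⟨e, rfl, rfl⟩⟩
    refine ⟨Pst, hle, ?_, ?_⟩
    · apply isAcyclic_of_side (P := fun x => ∃ e : ↥H.E, x = Sum.inr e)
      · intro x y h
        rcases H.bip_adj_cases (hle h) with ⟨v, e, -, rfl, rfl⟩ | ⟨v, e, -, rfl, rfl⟩
        · exact Or.inr ⟨e, rfl⟩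
        · exact Or.inl ⟨e, rfl⟩
      · rintro x ⟨e, rfl⟩
        rw [hnbhd e]
        exact Set.subsingleton_singleton
    · intro e
      rw [degr, hnbhd e, Set.ncard_singleton, hz e.val e.prop]
  -- main recursion on the total sum of `f`
  suffices key : ∀ (n : ℕ) (g : β → ℕ), (∀ e, e ∉ H.E → g e = 0) →
      (∀ E' : Finset β, E' ⊆ H.E → E'.Nonempty → (∑ e ∈ E', (g e : ℤ)) ≤ H.mu E') →
      (∑ e ∈ H.E, g e) ≤ n →
      ∃ P : SimpleGraph (↥H.V ⊕ ↥H.E), P ≤ H.Bip ∧ P.IsAcyclic ∧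
        ∀ e : ↥H.E, degr P (Sum.inr e) = g (e : β) + 1 by
    exact key (∑ e ∈ H.E, f e) f hf0 h2 le_rfl
  intro n
  induction n with
  | zero =>
    intro g hg0 _ hsum
    apply star
    intro e he
    exact (Finset.sum_eq_zero_iff.mp (Nat.le_zero.mp hsum)) e he
  | succ n IH =>
    intro g hg0 hmu hsum
    by_cases hz : ∀ e ∈ H.E, g e = 0
    · exact star g hz
    push_neg at hz
    obtain ⟨e0, he0, hge0⟩ := hz
    set g' : β → ℕ := fun e => if e = e0 then g e0 - 1 else g e with hg'
    have hg'le : ∀ e, g' e ≤ g e := by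
      intro e
      rw [hg']
      dsimp only
      split
      · next h => rw [h]; omega
      · exact le_rfl
    have hg'e0 : g' e0 + 1 = g e0 := by
      rw [hg']
      dsimp only
      rw [if_pos rfl]
      omega
    have hg'ne : ∀ e, e ≠ e0 → g' e = g e := by
      intro e he
      rw [hg']
      dsimp only
      rw [if_neg he]
    have hg'0 : ∀ e, e ∉ H.E → g' e = 0 := by
      intro e he
      rw [hg'ne e (fun h => he (h ▸ he0))]
      exact hg0 e he
    have hmu' : ∀ E' : Finset β, E' ⊆ H.E → E'.Nonempty →
        (∑ e ∈ E', (g' e : ℤ)) ≤ H.mu E' := by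
      intro E' hE hne
      refine le_trans (Finset.sum_le_sum fun i _ => ?_) (hmu E' hE hne)
      exact_mod_cast hg'le i
    have hsum' : ∑ e ∈ H.E, g' e ≤ n := by
      have hlt : ∑ e ∈ H.E, g' e < ∑ e ∈ H.E, g e :=
        Finset.sum_lt_sum (fun i _ => hg'le i) ⟨e0, he0, by omega⟩
      omega
    obtain ⟨P', hP'le, hP'ac, hP'deg⟩ := IH g' hg'0 hmu' hsum'
    set e0s : ↥H.E := ⟨e0, he0⟩ with he0s
    set x0 : ↥H.V ⊕ ↥H.E := Sum.inr e0s with hx0def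
    clear_value e0s x0
    suffices inner : ∀ (m : ℕ) (Q : SimpleGraph (↥H.V ⊕ ↥H.E)), Q ≤ H.Bip → Q.IsAcyclic →
        (∀ e : ↥H.E, degr Q (Sum.inr e) = g' (e : β) + 1) →
        {y | Q.Reachable x0 y}.ncard ≤ m →
        ∃ P : SimpleGraph (↥H.V ⊕ ↥H.E), P ≤ H.Bip ∧ P.IsAcyclic ∧
          ∀ e : ↥H.E, degr P (Sum.inr e) = g (e : β) + 1 by
      exact inner _ P' hP'le hP'ac hP'deg le_rfl
    intro m
    induction m with
    | zero =>
      intro Q _ _ _ hcard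
      exfalso
      have hx0m : x0 ∈ {y | Q.Reachable x0 y} := SimpleGraph.Reachable.refl x0
      have := (Set.ncard_pos (Set.toFinite _)).mpr ⟨x0, hx0m⟩
      omega
    | succ m IHm =>
      intro Q hQle hQac hQdeg hcard
      have hsidebip : ∀ ⦃x y : ↥H.V ⊕ ↥H.E⦄, Q.Adj x y →
          ((∃ e : ↥H.E, x = Sum.inr e) ↔ ¬ (∃ e : ↥H.E, y = Sum.inr e)) := by
        intro x y h
        rcases H.bip_adj_cases (hQle h) with ⟨v, e, -, rfl, rfl⟩ | ⟨v, e, -, rfl, rfl⟩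
        · simp
        · simp
      by_cases hA : ∃ (e : ↥H.E) (v : ↥H.V), Q.Reachable x0 (Sum.inr e) ∧
          (v : α) ∈ H.incid (e : β) ∧ ¬ Q.Reachable x0 (Sum.inl v)
      · obtain ⟨e1, v1, he1r, hv1i, hv1n⟩ := hA
        have hedgele : SimpleGraph.edge (Sum.inl v1) (Sum.inr e1) ≤ H.Bip := by
          intro x y h
          rw [SimpleGraph.edge_adj] at h
          rw [Hypergraph'.Bip, SimpleGraph.fromRel_adj]
          rcases h.1 with ⟨rfl, rfl⟩ | ⟨rfl, rfl⟩
          · exact ⟨h.2, Or.inl ⟨v1, e1, rfl, rfl, hv1i⟩⟩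
          · exact ⟨h.2, Or.inr ⟨v1, e1, rfl, rfl, hv1i⟩⟩
        have hv1nadj : (Sum.inl v1 : ↥H.V ⊕ ↥H.E) ∉ Q.neighborSet (Sum.inr e1) := by
          intro hmem
          exact hv1n (he1r.trans (SimpleGraph.Adj.reachable hmem))
        by_cases h10 : e1 = e0s
        · -- add an edge at `e0`
          subst h10
          have he1val : (e1 : β) = e0 := by rw [he0s]
          refine ⟨Q ⊔ SimpleGraph.edge (Sum.inl v1) (Sum.inr e1), sup_le hQle hedgele, ?_, ?_⟩
          · apply isAcyclic_sup_edge hQac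
            intro hre
            exact hv1n (he1r.trans hre.symm)
          · intro e
            by_cases he : e = e1
            · have hd := hQdeg e1
              rw [degr] at hd
              rw [he, degr, neighborSet_sup_edge_self (by simp),
                Set.ncard_insert_of_notMem hv1nadj (Set.toFinite _), hd, he1val]
              omega
            · have hd := hQdeg e
              rw [degr] at hd
              rw [degr, neighborSet_sup_edge_of_ne (by simp)
                (fun hh => he (Sum.inr_injective hh)), hd, hg'ne]
              intro hh
              apply he
              apply Subtype.ext
              rw [hh, he0s]
        · -- exchange an edge at `e1`
          have he1x0 : (Sum.inr e1 : ↥H.V ⊕ ↥H.E) ≠ x0 := by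
            rw [hx0def]
            intro hh
            exact h10 (Sum.inr_injective hh)
          obtain ⟨p0⟩ := he1r.symm
          set p := p0.toPath with hp
          have hnn : ¬ (p : Q.Walk (Sum.inr e1) x0).Nil := SimpleGraph.Walk.not_nil_of_ne he1x0
          obtain ⟨u, hadj, q, hq⟩ := SimpleGraph.Walk.not_nil_iff.mp hnn
          have hqp : q.IsPath ∧ (Sum.inr e1) ∉ q.support := by
            have hpp := p.2
            rw [hq, SimpleGraph.Walk.cons_isPath_iff] at hpp
            exact hpp
          obtain ⟨uv, hu⟩ : ∃ uv : ↥H.V, u = Sum.inl uv := by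
            rcases H.bip_adj_cases (hQle hadj) with ⟨v, e, -, hx, -⟩ | ⟨v, e, -, -, hy⟩
            · exact absurd hx (by simp)
            · exact ⟨v, hy⟩
          set Qd := Q.deleteEdges {s(Sum.inr e1, u)} with hQd
          have hQdle : Qd ≤ Q := SimpleGraph.deleteEdges_le _
          have hbr : ¬ Qd.Reachable (Sum.inr e1) u := by
            have hb := (SimpleGraph.isAcyclic_iff_forall_adj_isBridge.mp hQac) hadj
            exact SimpleGraph.isBridge_iff.mp hb
          have hqd : Qd.Reachable u x0 := by
            refine ⟨q.transfer Qd ?_⟩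
            intro e' he'
            rw [hQd, SimpleGraph.edgeSet_deleteEdges]
            refine ⟨q.edges_subset_edgeSet he', ?_⟩
            intro hmem
            rw [Set.mem_singleton_iff] at hmem
            exact hqp.2 (SimpleGraph.Walk.fst_mem_support_of_mem_edges q (hmem ▸ he'))
          have hne0e1 : ¬ Qd.Reachable x0 (Sum.inr e1) := by
            intro hr
            exact hbr (hr.symm.trans hqd.symm)
          have hnv1 : ¬ Qd.Reachable x0 (Sum.inl v1) := fun hr => hv1n (hr.mono hQdle)
          have hv1e1 : ¬ Qd.Reachable (Sum.inl v1) (Sum.inr e1) := by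
            intro hr
            exact hv1n (he1r.trans (hr.mono hQdle).symm)
          set Qn := Qd ⊔ SimpleGraph.edge (Sum.inl v1) (Sum.inr e1) with hQn
          have hQnle : Qn ≤ H.Bip := sup_le (le_trans hQdle hQle) hedgele
          have hQnac : Qn.IsAcyclic := isAcyclic_sup_edge (isAcyclic_mono hQdle hQac) hv1e1
          have hQndeg : ∀ e : ↥H.E, degr Qn (Sum.inr e) = g' (e : β) + 1 := by
            intro e
            by_cases he : e = e1
            · subst he
              have humem : u ∈ Q.neighborSet (Sum.inr e) := hadj
              have hv1mem : (Sum.inl v1 : ↥H.V ⊕ ↥H.E) ∉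
                  Q.neighborSet (Sum.inr e) \ {u} := fun hmem => hv1nadj hmem.1
              have hd := hQdeg e
              rw [degr] at hd
              rw [degr, hQn, neighborSet_sup_edge_self (by simp), hQd,
                neighborSet_deleteEdges_self,
                Set.ncard_insert_of_notMem hv1mem (Set.toFinite _),
                Set.ncard_diff_singleton_add_one humem (Set.toFinite _), hd]
            · have hd := hQdeg e
              rw [degr] at hd
              rw [degr, hQn, neighborSet_sup_edge_of_ne (by simp)
                (fun hh => he (Sum.inr_injective hh)), hQd,
                neighborSet_deleteEdges_of_ne
                (fun hh => he (Sum.inr_injective hh)) (by rw [hu]; simp), hd]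
          have hKsub : {y | Qn.Reachable x0 y} ⊆ {y | Q.Reachable x0 y} := by
            intro y hy
            exact (reachable_sup_edge hnv1 hne0e1 hy).mono hQdle
          have hKne : (Sum.inr e1 : ↥H.V ⊕ ↥H.E) ∉ {y | Qn.Reachable x0 y} := by
            intro hy
            exact hne0e1 (reachable_sup_edge hnv1 hne0e1 hy)
          have hss : {y | Qn.Reachable x0 y} ⊂ {y | Q.Reachable x0 y} :=
            (Set.ssubset_iff_of_subset hKsub).mpr ⟨Sum.inr e1, he1r, hKne⟩
          have hlt := Set.ncard_lt_ncard hss (Set.toFinite _)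
          exact IHm Qn hQnle hQnac hQndeg (by omega)
      · -- counting contradiction
        exfalso
        push_neg at hA
        set A : Finset (↥H.V ⊕ ↥H.E) :=
          univ.filter (fun v => (∃ e : ↥H.E, v = Sum.inr e) ∧ Q.Reachable x0 v) with hAdef
        set Kf : Finset (↥H.V ⊕ ↥H.E) := univ.filter (fun v => Q.Reachable x0 v) with hKfdef
        set B : Finset (↥H.V ⊕ ↥H.E) :=
          Kf.filter (fun x => ¬ (∃ e : ↥H.E, x = Sum.inr e)) with hBdef
        have hAmem : ∀ x, x ∈ A ↔ ((∃ e : ↥H.E, x = Sum.inr e) ∧ Q.Reachable x0 x) := by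
          intro x
          rw [hAdef, Finset.mem_filter]
          simp
        have hKfmem : ∀ x, x ∈ Kf ↔ Q.Reachable x0 x := by
          intro x
          rw [hKfdef, Finset.mem_filter]
          simp
        have hcnt2 := sum_degr_reachable hQac (fun x => ∃ e : ↥H.E, x = Sum.inr e)
          hsidebip x0 A Kf hAmem hKfmem
        have hABK : A.card + B.card = Kf.card := by
          rw [hAdef, hBdef, hKfdef]
          rw [← Finset.card_filter_add_card_filter_not
            (p := fun x : ↥H.V ⊕ ↥H.E => ∃ e : ↥H.E, x = Sum.inr e) (s := Kf)]
          congr 2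
          ext x
          simp only [Finset.mem_filter, Finset.mem_univ, true_and, hKfdef]
          exact and_comm
        set ext1 : (↥H.V ⊕ ↥H.E) → β := Sum.elim (fun _ => e0) (fun e => e.val) with hext1
        have hsumA : ∑ x ∈ A, degr Q x = (∑ x ∈ A, g' (ext1 x)) + A.card := by
          have hco : ∀ x ∈ A, degr Q x = g' (ext1 x) + 1 := by
            intro x hx
            rw [hAmem] at hx
            obtain ⟨⟨e, rfl⟩, -⟩ := hx
            exact hQdeg e
          rw [Finset.sum_congr rfl hco, Finset.sum_add_distrib, Finset.sum_const,
            smul_eq_mul, mul_one]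
        have hinj : ∀ x ∈ A, ∀ y ∈ A, ext1 x = ext1 y → x = y := by
          intro x hx y hy hxy
          rw [hAmem] at hx
          rw [hAmem] at hy
          obtain ⟨⟨e, rfl⟩, -⟩ := hx
          obtain ⟨⟨e', rfl⟩, -⟩ := hy
          rw [hext1] at hxy
          simp only [Sum.elim_inr] at hxy
          rw [Subtype.ext hxy]
        set E' : Finset β := A.image ext1 with hE'def
        have hsumE : ∑ e ∈ E', g' e = ∑ x ∈ A, g' (ext1 x) := Finset.sum_image hinj
        have hx0A : x0 ∈ A := by
          rw [hAmem]
          exact ⟨⟨e0s, hx0def⟩, SimpleGraph.Reachable.refl x0⟩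
        have he0E' : e0 ∈ E' := by
          rw [hE'def, Finset.mem_image]
          refine ⟨x0, hx0A, ?_⟩
          rw [hx0def, hext1]
          simp [he0s]
        have hE'sub : E' ⊆ H.E := by
          intro a ha
          rw [hE'def, Finset.mem_image] at ha
          obtain ⟨x, hx, rfl⟩ := ha
          rw [hAmem] at hx
          obtain ⟨⟨e, rfl⟩, -⟩ := hx
          rw [hext1]
          simpa using e.prop
        have hgg' : ∑ e ∈ E', g e = (∑ e ∈ E', g' e) + 1 := by
          rw [← Finset.sum_erase_add E' g he0E', ← Finset.sum_erase_add E' g' he0E']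
          have : ∑ x ∈ E'.erase e0, g x = ∑ x ∈ E'.erase e0, g' x :=
            Finset.sum_congr rfl fun x hx =>
              (hg'ne x (Finset.ne_of_mem_erase hx)).symm
          omega
        have hreachA : ∀ e : ↥H.E, (e : β) ∈ E' → Q.Reachable x0 (Sum.inr e) := by
          intro e he
          rw [hE'def, Finset.mem_image] at he
          obtain ⟨x, hx, hxe⟩ := he
          rw [hAmem] at hx
          obtain ⟨⟨e', rfl⟩, hr⟩ := hx
          rw [hext1] at hxe
          simp only [Sum.elim_inr] at hxe
          rwa [show e = e' from Subtype.ext hxe.symm]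
        have hbi : (E'.biUnion H.incid).card ≤ B.card := by
          refine Finset.card_le_card_of_injOn
            (fun a => if h : a ∈ H.V then (Sum.inl ⟨a, h⟩ : ↥H.V ⊕ ↥H.E) else x0) ?_ ?_
          · intro a ha
            rw [Finset.mem_coe, Finset.mem_biUnion] at ha
            obtain ⟨e, heE', hai⟩ := ha
            have haV : a ∈ H.V := H.incid_sub e (hE'sub heE') hai
            dsimp only
            rw [dif_pos haV]
            have hr : Q.Reachable x0 (Sum.inl ⟨a, haV⟩) := by
              have heE : e ∈ H.E := hE'sub heE'
              exact hA ⟨e, heE⟩ ⟨a, haV⟩ (hreachA ⟨e, heE⟩ heE') hai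
            rw [Finset.mem_coe, hBdef, Finset.mem_filter]
            refine ⟨(hKfmem _).mpr hr, by simp⟩
          · intro a ha b hb hab
            rw [Finset.mem_coe, Finset.mem_biUnion] at ha hb
            obtain ⟨ea, heaE', hai⟩ := ha
            obtain ⟨eb, hebE', hbi⟩ := hb
            have haV : a ∈ H.V := H.incid_sub ea (hE'sub heaE') hai
            have hbV : b ∈ H.V := H.incid_sub eb (hE'sub hebE') hbi
            simp only [dif_pos haV, dif_pos hbV] at hab
            exact congrArg Subtype.val (Sum.inl_injective hab)
        have hcomp : 1 ≤ H.compCount E' := by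
          haveI : Nonempty ((H.BipOn E').ConnectedComponent) :=
            ⟨(H.BipOn E').connectedComponentMk (Sum.inr ⟨e0, he0E'⟩)⟩
          exact Nat.card_pos
        have hmuE := hmu E' hE'sub ⟨e0, he0E'⟩
        rw [Hypergraph'.mu] at hmuE
        have hcast : (∑ e ∈ E', (g e : ℤ)) = ((∑ e ∈ E', g e : ℕ) : ℤ) := by
          push_cast
          rfl
        rw [hcast] at hmuE
        omega
end
end

section
/- Let {f_i} be a set of hypertrees in the hypergraph H = (V, E) (with Bip H connected) and let g : E → ℕ be a function so that g(e) ≥ 0 for all e ∈ E and Σ_{e∈E} g(e) = |V| − 1. If for every non-empty subset E' ⊆ E there is an index i with Σ_{e∈E'} g(e) ≤ Σ_{e∈E'} f_i(e), then g is a hypertree of H. -/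
open SimpleGraph Finset
open scoped Classical

noncomputable section

variable {α β : Type} [DecidableEq α] [DecidableEq β]

/-! ### Auxiliary development -/

namespace HTAux

open SimpleGraph

variable {W : Type} [Fintype W] [DecidableEq W]

/-- Number of connected components. -/
noncomputable def ncomp (G : SimpleGraph W) : ℕ := Nat.card G.ConnectedComponent

lemma reach_avoid {G : SimpleGraph W} {x y : W} (p : G.Walk x y) {d : Sym2 W}
    (hd : d ∉ p.edges) : (G.deleteEdges {d}).Reachable x y := by
  refine ⟨p.transfer _ fun e he => ?_⟩
  rw [edgeSet_deleteEdges]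
  refine ⟨p.edges_subset_edgeSet he, ?_⟩
  simp only [Set.mem_singleton_iff]
  rintro rfl
  exact hd he

lemma path_decomp {G : SimpleGraph W} {u v : W} {x y : W} (p : G.Walk x y)
    (hp : p.IsPath) (hd : s(u,v) ∈ p.edges) :
    ((G.deleteEdges {s(u,v)}).Reachable x u ∧ (G.deleteEdges {s(u,v)}).Reachable v y) ∨
    ((G.deleteEdges {s(u,v)}).Reachable x v ∧ (G.deleteEdges {s(u,v)}).Reachable u y) := by
  induction p with
  | nil => simp at hd
  | @cons a c b h q ih =>
    rw [Walk.cons_isPath_iff] at hp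
    have hq : s(a,c) ∉ q.edges := fun hmem => hp.2 (q.fst_mem_support_of_mem_edges hmem)
    rw [Walk.edges_cons, List.mem_cons] at hd
    rcases hd with hd | hd
    · rw [Sym2.eq_iff] at hd
      rcases hd with ⟨rfl, rfl⟩ | ⟨rfl, rfl⟩
      · exact Or.inl ⟨Reachable.refl _, reach_avoid q hq⟩
      · exact Or.inr ⟨Reachable.refl _, reach_avoid q (by
          intro hmem
          exact hq (by rwa [Sym2.eq_swap] at hmem))⟩
    · have hne : s(a,c) ≠ s(u,v) := by
        intro h'; rw [h'] at hq; exact hq hd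
      have hadj : (G.deleteEdges {s(u,v)}).Adj a c := by
        rw [deleteEdges_adj]
        exact ⟨h, by simpa using hne⟩
      rcases ih hp.1 hd with ⟨r1, r2⟩ | ⟨r1, r2⟩
      · exact Or.inl ⟨hadj.reachable.trans r1, r2⟩
      · exact Or.inr ⟨hadj.reachable.trans r1, r2⟩

lemma reach_decomp {G : SimpleGraph W} {u v : W} {x y : W} (h : G.Reachable x y) :
    (G.deleteEdges {s(u,v)}).Reachable x y ∨
    ((G.deleteEdges {s(u,v)}).Reachable x u ∧ (G.deleteEdges {s(u,v)}).Reachable v y) ∨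
    ((G.deleteEdges {s(u,v)}).Reachable x v ∧ (G.deleteEdges {s(u,v)}).Reachable u y) := by
  obtain ⟨q⟩ := h
  by_cases hq : s(u,v) ∈ q.bypass.edges
  · rcases path_decomp q.bypass q.bypass_isPath hq with h | h
    · exact Or.inr (Or.inl h)
    · exact Or.inr (Or.inr h)
  · exact Or.inl (reach_avoid _ hq)

lemma reach_of_rel {G G' : SimpleGraph W} (h : ∀ a b, G.Adj a b → G'.Reachable a b)
    {a b : W} (hr : G.Reachable a b) : G'.Reachable a b := by
  obtain ⟨p⟩ := hr
  induction p with
  | nil => exact Reachable.refl _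
  | cons hadj q ih => exact (h _ _ hadj).trans ih

/-- The canonical map between component types. -/
noncomputable def compMap {G G' : SimpleGraph W} (h : ∀ a b, G.Adj a b → G'.Reachable a b) :
    G.ConnectedComponent → G'.ConnectedComponent :=
  ConnectedComponent.lift (fun w => G'.connectedComponentMk w)
    (fun _ _ p _ => ConnectedComponent.sound (reach_of_rel h ⟨p⟩))

lemma compMap_mk {G G' : SimpleGraph W} (h : ∀ a b, G.Adj a b → G'.Reachable a b) (a : W) :
    compMap h (G.connectedComponentMk a) = G'.connectedComponentMk a := rfl

lemma compMap_surjective {G G' : SimpleGraph W} (h : ∀ a b, G.Adj a b → G'.Reachable a b) :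
    Function.Surjective (compMap h) := by
  intro c
  refine c.ind fun a => ⟨G.connectedComponentMk a, rfl⟩

lemma ncomp_le_of_rel {G G' : SimpleGraph W} (h : ∀ a b, G.Adj a b → G'.Reachable a b) :
    ncomp G' ≤ ncomp G :=
  Nat.card_le_card_of_surjective _ (compMap_surjective h)

lemma ncomp_deleteEdge_le (G : SimpleGraph W) (u v : W) :
    ncomp (G.deleteEdges {s(u,v)}) ≤ ncomp G + 1 := by
  classical
  set G' := G.deleteEdges {s(u,v)} with hG'
  haveI : Fintype G.ConnectedComponent := Fintype.ofFinite _
  haveI : Fintype G'.ConnectedComponent := Fintype.ofFinite _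
  have hrel : ∀ a b, G'.Adj a b → G.Reachable a b :=
    fun a b hab => ((G.deleteEdges_le _) hab).reachable
  have hinj : Set.InjOn (compMap hrel) ↑((Finset.univ : Finset G'.ConnectedComponent).erase
      (G'.connectedComponentMk v)) := by
    intro c hc c' hc' hcc
    simp only [Finset.coe_erase, Set.mem_diff, Set.mem_singleton_iff] at hc hc'
    induction c using ConnectedComponent.ind with | _ a =>
    induction c' using ConnectedComponent.ind with | _ b =>
    rw [compMap_mk, compMap_mk] at hcc
    have hreach := ConnectedComponent.exact hcc
    rcases reach_decomp (u := u) (v := v) hreach with h1 | ⟨h1, h2⟩ | ⟨h1, h2⟩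
    · exact ConnectedComponent.sound h1
    · exact absurd (ConnectedComponent.sound h2.symm) hc'.2
    · exact absurd (ConnectedComponent.sound h1) hc.2
  have hcard := Finset.card_le_card_of_injOn (compMap hrel) (fun c _ => Finset.mem_univ _) hinj
  rw [Finset.card_erase_of_mem (Finset.mem_univ _)] at hcard
  have : Fintype.card G'.ConnectedComponent - 1 ≤ Fintype.card G.ConnectedComponent := by
    simpa using hcard
  rw [ncomp, ncomp, Nat.card_eq_fintype_card, Nat.card_eq_fintype_card]
  omega

lemma ncomp_lt_of_bridge {G : SimpleGraph W} {u v : W} (hadj : G.Adj u v)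
    (hnr : ¬(G.deleteEdges {s(u,v)}).Reachable u v) :
    ncomp G < ncomp (G.deleteEdges {s(u,v)}) := by
  classical
  set G' := G.deleteEdges {s(u,v)} with hG'
  haveI : Fintype G.ConnectedComponent := Fintype.ofFinite _
  haveI : Fintype G'.ConnectedComponent := Fintype.ofFinite _
  have hrel : ∀ a b, G'.Adj a b → G.Reachable a b :=
    fun a b hab => ((G.deleteEdges_le _) hab).reachable
  have hsurj := compMap_surjective hrel
  have hle : Fintype.card G.ConnectedComponent ≤ Fintype.card G'.ConnectedComponent :=
    Fintype.card_le_of_surjective _ hsurj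
  rw [ncomp, ncomp, Nat.card_eq_fintype_card, Nat.card_eq_fintype_card]
  rcases lt_or_eq_of_le hle with h | h
  · exact h
  · exfalso
    have hbij : Function.Bijective (compMap hrel) :=
      (Fintype.bijective_iff_surjective_and_card _).2 ⟨hsurj, h.symm⟩
    have : G'.connectedComponentMk u = G'.connectedComponentMk v := by
      apply hbij.1
      rw [compMap_mk, compMap_mk]
      exact ConnectedComponent.sound hadj.reachable
    exact hnr (ConnectedComponent.exact this)

lemma ncomp_bot : ncomp (⊥ : SimpleGraph W) = Fintype.card W := by
  classical
  haveI : Fintype (⊥ : SimpleGraph W).ConnectedComponent := Fintype.ofFinite _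
  rw [ncomp, Nat.card_eq_fintype_card]
  symm
  apply Fintype.card_of_bijective (f := fun w => (⊥ : SimpleGraph W).connectedComponentMk w)
  constructor
  · intro a b hab
    exact (reachable_bot).1 (ConnectedComponent.exact hab)
  · intro c
    exact c.ind fun a => ⟨a, rfl⟩

lemma edgeFinset_deleteEdges (G : SimpleGraph W) (d : Sym2 W) :
    (G.deleteEdges {d}).edgeFinset = G.edgeFinset.erase d := by
  ext e
  simp [Set.mem_toFinset, edgeSet_deleteEdges, and_comm]

lemma card_W_le (G : SimpleGraph W) : Fintype.card W ≤ G.edgeFinset.card + ncomp G := by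
  classical
  generalize hn : G.edgeFinset.card = n
  induction n generalizing G with
  | zero =>
    have : G = ⊥ := by
      rw [← edgeSet_eq_empty, ← coe_edgeFinset, Finset.card_eq_zero.1 hn]
      simp
    rw [this, ncomp_bot]
    simp
  | succ n ih =>
    have hne : G.edgeFinset.Nonempty := by
      rw [← Finset.card_pos, hn]; omega
    obtain ⟨d, hd⟩ := hne
    induction d using Sym2.ind with | _ u v =>
    have h1 : (G.deleteEdges {s(u,v)}).edgeFinset.card = n := by
      rw [edgeFinset_deleteEdges, Finset.card_erase_of_mem hd, hn]
      omega
    have h2 := ih _ (by convert h1)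
    have h3 := ncomp_deleteEdge_le G u v
    omega

lemma isAcyclic_mono {G G' : SimpleGraph W} (h : G' ≤ G) (hG : G.IsAcyclic) :
    G'.IsAcyclic := by
  intro a c hc
  have hsub : ∀ e ∈ c.edges, e ∈ G.edgeSet := fun e he =>
    edgeSet_mono h (c.edges_subset_edgeSet he)
  exact hG (c.transfer G hsub) (hc.transfer hsub)

lemma acyclic_card {G : SimpleGraph W} (hG : G.IsAcyclic) :
    G.edgeFinset.card + ncomp G ≤ Fintype.card W := by
  classical
  generalize hn : G.edgeFinset.card = n
  induction n generalizing G with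
  | zero =>
    have : G = ⊥ := by
      rw [← edgeSet_eq_empty, ← coe_edgeFinset, Finset.card_eq_zero.1 hn]
      simp
    rw [this, ncomp_bot]
    simp
  | succ n ih =>
    have hne : G.edgeFinset.Nonempty := by
      rw [← Finset.card_pos, hn]; omega
    obtain ⟨d, hd⟩ := hne
    induction d using Sym2.ind with | _ u v =>
    have hdE : s(u,v) ∈ G.edgeSet := by rwa [← mem_edgeFinset]
    have hbr := (isAcyclic_iff_forall_edge_isBridge.1 hG) hdE
    rw [isBridge_iff] at hbr
    have hnr : ¬(G.deleteEdges {s(u,v)}).Reachable u v := hbr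
    have hlt := ncomp_lt_of_bridge (by rwa [mem_edgeSet] at hdE) hnr
    have hac : (G.deleteEdges {s(u,v)}).IsAcyclic := isAcyclic_mono (G.deleteEdges_le _) hG
    have h1 : (G.deleteEdges {s(u,v)}).edgeFinset.card = n := by
      rw [edgeFinset_deleteEdges, Finset.card_erase_of_mem hd, hn]
      omega
    have h2 := ih hac (by convert h1)
    omega

lemma ncomp_connected {G : SimpleGraph W} (hG : G.Connected) : ncomp G = 1 := by
  haveI : Nonempty W := hG.nonempty
  haveI : Subsingleton G.ConnectedComponent := by
    constructor
    intro c c'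
    induction c using ConnectedComponent.ind with | _ a =>
    induction c' using ConnectedComponent.ind with | _ b =>
    exact ConnectedComponent.sound (hG.preconnected a b)
  haveI : Unique G.ConnectedComponent :=
    uniqueOfSubsingleton (G.connectedComponentMk (Classical.arbitrary W))
  rw [ncomp, Nat.card_unique]

lemma tree_of_connected_card {G : SimpleGraph W} (hc : G.Connected)
    (hcard : G.edgeFinset.card + 1 ≤ Fintype.card W) : G.IsTree := by
  refine ⟨hc, ?_⟩
  by_contra hnac
  rw [isAcyclic_iff_forall_edge_isBridge] at hnac
  push_neg at hnac
  obtain ⟨d, hdE, hnbr⟩ := hnac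
  induction d using Sym2.ind with | _ u v =>
  rw [isBridge_iff] at hnbr
  have hadj : G.Adj u v := by rwa [mem_edgeSet] at hdE
  have hr : (G.deleteEdges {s(u,v)}).Reachable u v := by
    by_contra hr
    exact hnbr hr
  have hle : ncomp (G.deleteEdges {s(u,v)}) ≤ ncomp G := by
    apply ncomp_le_of_rel
    intro a b hab
    by_cases he : s(a,b) = s(u,v)
    · rw [Sym2.eq_iff] at he
      rcases he with ⟨rfl, rfl⟩ | ⟨rfl, rfl⟩
      · exact hr
      · exact hr.symm
    · exact (SimpleGraph.Adj.reachable (by rw [deleteEdges_adj]; exact ⟨hab, by simpa using he⟩))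
  have h1 := card_W_le (G.deleteEdges {s(u,v)})
  have h2 : (G.deleteEdges {s(u,v)}).edgeFinset.card = G.edgeFinset.card - 1 := by
    rw [edgeFinset_deleteEdges, Finset.card_erase_of_mem (by rwa [mem_edgeFinset])]
  have h3 := ncomp_connected hc
  have h4 : 1 ≤ G.edgeFinset.card := by
    rw [Finset.one_le_card]
    exact ⟨s(u,v), by rwa [mem_edgeFinset]⟩
  have h1' : Fintype.card W ≤ G.edgeFinset.card - 1 + ncomp (G.deleteEdges {s(u,v)}) := by
    rw [← h2]; convert h1
  omega


section Swap

variable {T : SimpleGraph W} {x y u v : W}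

/-- The graph obtained from `T` by deleting edge `d` and adding edge `s(x,y)`. -/
noncomputable def swapG (T : SimpleGraph W) (d : Sym2 W) (x y : W) : SimpleGraph W :=
  (T.deleteEdges {d}) ⊔ fromEdgeSet {s(x,y)}

lemma swapG_adj {d : Sym2 W} (hxy : x ≠ y) {a b : W} :
    (swapG T d x y).Adj a b ↔
      ((T.Adj a b ∧ s(a,b) ≠ d) ∨ (a = x ∧ b = y) ∨ (a = y ∧ b = x)) := by
  simp only [swapG, sup_adj, deleteEdges_adj, Set.mem_singleton_iff, fromEdgeSet_adj]
  constructor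
  · rintro (⟨h1, h2⟩ | ⟨h1, h2⟩)
    · exact Or.inl ⟨h1, h2⟩
    · rw [Sym2.eq_iff] at h1; exact Or.inr h1
  · rintro (⟨h1, h2⟩ | ⟨rfl, rfl⟩ | ⟨rfl, rfl⟩)
    · exact Or.inl ⟨h1, h2⟩
    · exact Or.inr ⟨by rw [Sym2.eq_iff]; exact Or.inl ⟨rfl, rfl⟩, hxy⟩
    · exact Or.inr ⟨by rw [Sym2.eq_iff]; exact Or.inr ⟨rfl, rfl⟩, hxy.symm⟩

lemma swapG_edgeFinset (hxy : x ≠ y) (d : Sym2 W) :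
    (swapG T d x y).edgeFinset = insert s(x,y) (T.edgeFinset.erase d) := by
  ext e
  rw [mem_edgeFinset]
  rw [show (swapG T d x y).edgeSet = insert s(x,y) (T.edgeSet \ {d}) by
    rw [swapG, edgeSet_sup, edgeSet_deleteEdges, edgeSet_fromEdgeSet]
    rw [Set.union_comm]
    have hns : ({s(x,y)} : Set (Sym2 W)) \ Sym2.diagSet = {s(x,y)} := by
      ext e
      simp only [Set.mem_diff, Set.mem_singleton_iff, Sym2.mem_diagSet, and_iff_left_iff_imp]
      rintro rfl
      rw [Sym2.mk_isDiag_iff]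
      exact hxy
    rw [hns, Set.insert_eq]]
  simp only [Set.mem_insert_iff, Set.mem_diff, Set.mem_singleton_iff, Finset.mem_insert,
    Finset.mem_erase, mem_edgeFinset]
  tauto

lemma swapG_isTree (hT : T.IsTree) (hxy : x ≠ y) (hnadj : ¬ T.Adj x y)
    {p : T.Walk x y} (hp : p.IsPath) (hd : s(u,v) ∈ p.edges) :
    (swapG T s(u,v) x y).IsTree := by
  have hpdec := path_decomp p hp hd
  have hle : T.deleteEdges {s(u,v)} ≤ swapG T s(u,v) x y := le_sup_left
  have hadj' : (swapG T s(u,v) x y).Adj x y := by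
    rw [swapG_adj hxy]; exact Or.inr (Or.inl ⟨rfl, rfl⟩)
  have hux : (swapG T s(u,v) x y).Reachable u x ∧ (swapG T s(u,v) x y).Reachable v x := by
    rcases hpdec with ⟨h1, h2⟩ | ⟨h1, h2⟩
    · exact ⟨(h1.mono hle).symm, (h2.mono hle).trans hadj'.symm.reachable⟩
    · exact ⟨(h2.mono hle).trans hadj'.symm.reachable, (h1.mono hle).symm⟩
  have hreach : ∀ a, (swapG T s(u,v) x y).Reachable a x := by
    intro a
    obtain ⟨q0⟩ := hT.isConnected.preconnected a x
    by_cases hq : s(u,v) ∈ q0.bypass.edges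
    · rcases path_decomp q0.bypass q0.bypass_isPath hq with ⟨h1, h2⟩ | ⟨h1, h2⟩
      · exact (h1.mono hle).trans hux.1
      · exact (h1.mono hle).trans hux.2
    · exact (reach_avoid _ hq).mono hle
  have hconn : (swapG T s(u,v) x y).Connected := by
    haveI : Nonempty W := ⟨x⟩
    exact Connected.mk (fun a b => (hreach a).trans (hreach b).symm)
  apply tree_of_connected_card hconn
  rw [swapG_edgeFinset hxy]
  have hdT : s(u,v) ∈ T.edgeFinset := by
    rw [mem_edgeFinset]; exact p.edges_subset_edgeSet hd
  have hxyT : s(x,y) ∉ T.edgeFinset.erase s(u,v) := by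
    intro hmem
    exact hnadj ((mem_edgeFinset).1 (Finset.mem_of_mem_erase hmem))
  rw [Finset.card_insert_of_notMem hxyT, Finset.card_erase_of_mem hdT]
  have hc := hT.card_edgeFinset
  have h1 : 1 ≤ T.edgeFinset.card := Finset.card_pos.2 ⟨_, hdT⟩
  omega

lemma swapG_degree_other (hxy : x ≠ y) {z : W} (hzx : z ≠ x) (hzy : z ≠ y)
    (hzu : z ≠ u) (hzv : z ≠ v) :
    (swapG T s(u,v) x y).degree z = T.degree z := by
  rw [← card_neighborFinset_eq_degree, ← card_neighborFinset_eq_degree]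
  congr 1
  ext w
  simp only [mem_neighborFinset, swapG_adj hxy]
  constructor
  · rintro (⟨h1, _⟩ | ⟨hh, rfl⟩ | ⟨hh, rfl⟩)
    · exact h1
    · exact absurd hh hzx
    · exact absurd hh hzy
  · intro h1
    refine Or.inl ⟨h1, fun hh => ?_⟩
    rw [Sym2.eq_iff] at hh
    rcases hh with ⟨hh1, -⟩ | ⟨hh1, -⟩
    · exact hzu hh1
    · exact hzv hh1

lemma swapG_degree_plus (hxy : x ≠ y) (hnadj : ¬ T.Adj x y) (hyu : y ≠ u) (hyv : y ≠ v) :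
    (swapG T s(u,v) x y).degree y = T.degree y + 1 := by
  rw [← card_neighborFinset_eq_degree, ← card_neighborFinset_eq_degree]
  have hset : (swapG T s(u,v) x y).neighborFinset y = insert x (T.neighborFinset y) := by
    ext w
    simp only [mem_neighborFinset, swapG_adj hxy, Finset.mem_insert]
    constructor
    · rintro (⟨h1, _⟩ | ⟨hh, rfl⟩ | ⟨-, rfl⟩)
      · exact Or.inr h1
      · exact absurd hh hxy.symm
      · exact Or.inl rfl
    · rintro (rfl | h1)
      · exact Or.inr (Or.inr ⟨trivial, rfl⟩)
      · refine Or.inl ⟨h1, fun hh => ?_⟩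
        rw [Sym2.eq_iff] at hh
        rcases hh with ⟨hh1, -⟩ | ⟨hh1, -⟩
        · exact hyu hh1
        · exact hyv hh1
  rw [hset, Finset.card_insert_of_notMem]
  rw [mem_neighborFinset]
  intro h1
  exact hnadj h1.symm

lemma swapG_degree_minus (hxy : x ≠ y) (hd : T.Adj u v) (hvx : v ≠ x) (hvy : v ≠ y) :
    (swapG T s(u,v) x y).degree v + 1 = T.degree v := by
  rw [← card_neighborFinset_eq_degree, ← card_neighborFinset_eq_degree]
  have hset : (swapG T s(u,v) x y).neighborFinset v = (T.neighborFinset v).erase u := by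
    ext w
    simp only [mem_neighborFinset, swapG_adj hxy, Finset.mem_erase]
    constructor
    · rintro (⟨h1, h2⟩ | ⟨hh, rfl⟩ | ⟨hh, rfl⟩)
      · refine ⟨fun hh => ?_, h1⟩
        subst hh
        exact h2 Sym2.eq_swap
      · exact absurd hh hvx
      · exact absurd hh hvy
    · rintro ⟨h1, h2⟩
      refine Or.inl ⟨h2, fun hh => ?_⟩
      rw [Sym2.eq_iff] at hh
      rcases hh with ⟨hh1, -⟩ | ⟨-, rfl⟩
      · exact hd.ne hh1.symm
      · exact h1 rfl
  rw [hset, Finset.card_erase_of_mem (by rw [mem_neighborFinset]; exact hd.symm)]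
  have : 1 ≤ (T.neighborFinset v).card :=
    Finset.card_pos.2 ⟨u, by rw [mem_neighborFinset]; exact hd.symm⟩
  omega

lemma swapG_degree_both (hxy : x ≠ y) (hnadj : ¬ T.Adj x y) (hd : T.Adj u y) (hux : u ≠ x) :
    (swapG T s(u,y) x y).degree y = T.degree y := by
  rw [← card_neighborFinset_eq_degree, ← card_neighborFinset_eq_degree]
  have hset : (swapG T s(u,y) x y).neighborFinset y
      = insert x ((T.neighborFinset y).erase u) := by
    ext w
    simp only [mem_neighborFinset, swapG_adj hxy, Finset.mem_insert, Finset.mem_erase]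
    constructor
    · rintro (⟨h1, h2⟩ | ⟨hh, rfl⟩ | ⟨-, rfl⟩)
      · refine Or.inr ⟨fun hh => ?_, h1⟩
        subst hh
        exact h2 Sym2.eq_swap
      · exact absurd hh hxy.symm
      · exact Or.inl rfl
    · rintro (rfl | ⟨h1, h2⟩)
      · exact Or.inr (Or.inr ⟨trivial, rfl⟩)
      · refine Or.inl ⟨h2, fun hh => ?_⟩
        rw [Sym2.eq_iff] at hh
        rcases hh with ⟨hh1, -⟩ | ⟨-, rfl⟩
        · exact hd.ne hh1.symm
        · exact h1 rfl
  have hxmem : x ∉ (T.neighborFinset y).erase u := by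
    intro hmem
    rw [Finset.mem_erase, mem_neighborFinset] at hmem
    exact hnadj hmem.2.symm
  have humem : u ∈ T.neighborFinset y := by rw [mem_neighborFinset]; exact hd.symm
  rw [hset, Finset.card_insert_of_notMem hxmem, Finset.card_erase_of_mem humem]
  have : 1 ≤ (T.neighborFinset y).card := Finset.card_pos.2 ⟨u, humem⟩
  omega

lemma two_le_degree_interior {G : SimpleGraph W} {x y : W} (p : G.Walk x y)
    (hp : p.IsPath) {z : W} (hz : z ∈ p.support) (hzx : z ≠ x) (hzy : z ≠ y) :
    2 ≤ G.degree z := by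
  induction p with
  | nil =>
    rw [Walk.support_nil] at hz
    simp at hz
    exact absurd hz hzx
  | @cons a c b h q ih =>
    rw [Walk.support_cons, List.mem_cons] at hz
    rcases hz with rfl | hz
    · exact absurd rfl hzx
    by_cases hzc : z = c
    · subst hzc
      cases q with
      | nil => exact absurd rfl hzy
      | @cons _ c' _ h' q' =>
        rw [Walk.cons_isPath_iff] at hp
        have hc' : c' ∈ (Walk.cons h' q').support := by
          rw [Walk.support_cons, List.mem_cons]
          exact Or.inr (Walk.start_mem_support q')
        have hac' : a ≠ c' := by
          rintro rfl
          exact hp.2 hc'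
        have hsub : ({a, c'} : Finset W) ⊆ G.neighborFinset z := by
          intro t ht
          rw [Finset.mem_insert, Finset.mem_singleton] at ht
          rw [mem_neighborFinset]
          rcases ht with rfl | rfl
          · exact h.symm
          · exact h'
        calc 2 = ({a, c'} : Finset W).card := (Finset.card_pair hac').symm
        _ ≤ (G.neighborFinset z).card := Finset.card_le_card hsub
        _ = G.degree z := card_neighborFinset_eq_degree _ _
    · rw [Walk.cons_isPath_iff] at hp
      exact ih hp.1 hz hzc hzy

end Swap

lemma degr_eq_degree (T : SimpleGraph W) (x : W) : degr T x = T.degree x := by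
  rw [degr, ← card_neighborFinset_eq_degree, neighborFinset_def]
  exact Set.ncard_eq_toFinset_card' _

lemma measure_drop {γ : Type} [DecidableEq γ] {s t : Finset γ} {e b' : γ}
    (he1 : e ∈ s) (he2 : e ∉ t) (hb1 : b' ∉ s) (hb2 : b' ∈ t) :
    ((insert b' (s.erase e)) \ t).card + (t \ (insert b' (s.erase e))).card + 2
      = (s \ t).card + (t \ s).card := by
  have h1 : (insert b' (s.erase e)) \ t = (s \ t).erase e := by
    ext x
    simp only [Finset.mem_sdiff, Finset.mem_insert, Finset.mem_erase]
    constructor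
    · rintro ⟨rfl | ⟨hx1, hx2⟩, hx3⟩
      · exact absurd hb2 hx3
      · exact ⟨hx1, hx2, hx3⟩
    · rintro ⟨hx1, hx2, hx3⟩
      exact ⟨Or.inr ⟨hx1, hx2⟩, hx3⟩
  have h2 : t \ (insert b' (s.erase e)) = (t \ s).erase b' := by
    ext x
    simp only [Finset.mem_sdiff, Finset.mem_insert, Finset.mem_erase, not_or, not_and]
    constructor
    · rintro ⟨hx1, hx2, hx3⟩
      refine ⟨hx2, hx1, fun hxs => ?_⟩
      rcases eq_or_ne x e with rfl | hxe
      · exact he2 hx1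
      · exact hx3 hxe hxs
    · rintro ⟨hx1, hx2, hx3⟩
      exact ⟨hx2, hx1, fun _ hxs => hx3 hxs⟩
  have he' : e ∈ s \ t := Finset.mem_sdiff.2 ⟨he1, he2⟩
  have hb' : b' ∈ t \ s := Finset.mem_sdiff.2 ⟨hb2, hb1⟩
  rw [h1, h2, Finset.card_erase_of_mem he', Finset.card_erase_of_mem hb']
  have c1 : 1 ≤ (s \ t).card := Finset.card_pos.2 ⟨e, he'⟩
  have c2 : 1 ≤ (t \ s).card := Finset.card_pos.2 ⟨b', hb'⟩
  omega


lemma edgeFinset_fromEdgeSet_finset (s : Finset (Sym2 W)) (hs : ∀ e ∈ s, ¬ e.IsDiag) :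
    (fromEdgeSet (↑s : Set (Sym2 W))).edgeFinset = s := by
  ext e
  rw [mem_edgeFinset, edgeSet_fromEdgeSet]
  simp only [Set.mem_diff, Finset.mem_coe, Set.mem_setOf_eq]
  constructor
  · rintro ⟨h1, -⟩
    exact h1
  · intro h1
    exact ⟨h1, hs e h1⟩

lemma edgeFinset_card_eq_ncard {G : SimpleGraph W} {inst : Fintype G.edgeSet} :
    (@SimpleGraph.edgeFinset W G inst).card = G.edgeSet.ncard :=
  (Set.ncard_eq_toFinset_card' _).symm

lemma edgeSet_fromEdgeSet_finset (s : Finset (Sym2 W)) (hs : ∀ e ∈ s, ¬ e.IsDiag) :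
    (fromEdgeSet (↑s : Set (Sym2 W))).edgeSet = ↑s := by
  rw [edgeSet_fromEdgeSet]
  ext e
  simp only [Set.mem_diff, Finset.mem_coe, Set.mem_setOf_eq]
  exact ⟨fun h => h.1, fun h => ⟨h, hs e h⟩⟩

lemma card_W_le' (s : Finset (Sym2 W)) (hs : ∀ e ∈ s, ¬ e.IsDiag) :
    Fintype.card W ≤ s.card + ncomp (fromEdgeSet (↑s : Set (Sym2 W))) := by
  have h := card_W_le (fromEdgeSet (↑s : Set (Sym2 W)))
  rwa [edgeFinset_card_eq_ncard, edgeSet_fromEdgeSet_finset s hs,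
    Set.ncard_coe_finset] at h

lemma acyclic_card' (s : Finset (Sym2 W)) (hs : ∀ e ∈ s, ¬ e.IsDiag)
    (hac : (fromEdgeSet (↑s : Set (Sym2 W))).IsAcyclic) :
    s.card + ncomp (fromEdgeSet (↑s : Set (Sym2 W))) ≤ Fintype.card W := by
  have h := acyclic_card hac
  rwa [edgeFinset_card_eq_ncard, edgeSet_fromEdgeSet_finset s hs,
    Set.ncard_coe_finset] at h

end HTAux

section HTMain

open SimpleGraph HTAux Sum

variable (H : Hypergraph' α β)

lemma bip_adj_inl_inr {v : ↥H.V} {e : ↥H.E} :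
    H.Bip.Adj (Sum.inl v) (Sum.inr e) ↔ (v : α) ∈ H.incid (e : β) := by
  rw [Hypergraph'.Bip, fromRel_adj]
  constructor
  · rintro ⟨-, h | h⟩
    · obtain ⟨v', e', hv, he, hm⟩ := h
      rw [Sum.inl.injEq] at hv
      rw [Sum.inr.injEq] at he
      subst hv; subst he
      exact hm
    · obtain ⟨v', e', hv, -, -⟩ := h
      exact absurd hv (by simp)
  · intro hm
    exact ⟨by simp, Or.inl ⟨v, e, rfl, rfl, hm⟩⟩

lemma bip_adj_shape {a b : (↥H.V ⊕ ↥H.E)} (h : H.Bip.Adj a b) :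
    ∃ (v : ↥H.V) (e : ↥H.E), (v : α) ∈ H.incid (e : β) ∧
      ((a = Sum.inl v ∧ b = Sum.inr e) ∨ (a = Sum.inr e ∧ b = Sum.inl v)) := by
  rw [Hypergraph'.Bip, fromRel_adj] at h
  rcases h.2 with ⟨v, e, h1, h2, hm⟩ | ⟨v, e, h1, h2, hm⟩
  · exact ⟨v, e, hm, Or.inl ⟨h1, h2⟩⟩
  · exact ⟨v, e, hm, Or.inr ⟨h2, h1⟩⟩

lemma edge_shape {T : SimpleGraph (↥H.V ⊕ ↥H.E)} (hle : T ≤ H.Bip) {ε : Sym2 (↥H.V ⊕ ↥H.E)}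
    (hε : ε ∈ T.edgeSet) :
    ∃ (v : ↥H.V) (e : ↥H.E), ε = s(Sum.inl v, Sum.inr e) ∧ (v : α) ∈ H.incid (e : β) := by
  induction ε using Sym2.ind with | _ a b =>
  rw [mem_edgeSet] at hε
  obtain ⟨v, e, hm, ⟨rfl, rfl⟩ | ⟨rfl, rfl⟩⟩ := bip_adj_shape H (hle hε)
  · exact ⟨v, e, rfl, hm⟩
  · exact ⟨v, e, Sym2.eq_swap, hm⟩

lemma realizes_degree {T : SimpleGraph (↥H.V ⊕ ↥H.E)} {f : β → ℕ} (h : H.Realizes T f) (e : ↥H.E) :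
    T.degree (Sum.inr e) = f (e : β) + 1 := by
  rw [← degr_eq_degree]
  exact h.2.2 e

/-- The edges of `T` incident to hyperedges in `C`. -/
noncomputable def edgesAt (T : SimpleGraph (↥H.V ⊕ ↥H.E)) (C : Finset ↥H.E) : Finset (Sym2 (↥H.V ⊕ ↥H.E)) :=
  C.biUnion fun e => T.incidenceFinset (Sum.inr e)

lemma mem_edgesAt {T : SimpleGraph (↥H.V ⊕ ↥H.E)} {C : Finset ↥H.E} {ε : Sym2 (↥H.V ⊕ ↥H.E)} :
    ε ∈ edgesAt H T C ↔ ε ∈ T.edgeSet ∧ ∃ e ∈ C, Sum.inr e ∈ ε := by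
  constructor
  · intro h
    rw [edgesAt, Finset.mem_biUnion] at h
    obtain ⟨e, he, hmem⟩ := h
    rw [mem_incidenceFinset] at hmem
    exact ⟨hmem.1, e, he, hmem.2⟩
  · rintro ⟨h1, e, he, h2⟩
    rw [edgesAt, Finset.mem_biUnion]
    exact ⟨e, he, by rw [mem_incidenceFinset]; exact ⟨h1, h2⟩⟩

lemma card_edgesAt {T : SimpleGraph (↥H.V ⊕ ↥H.E)} (hle : T ≤ H.Bip) (C : Finset ↥H.E) :
    (edgesAt H T C).card = ∑ e ∈ C, T.degree (Sum.inr e) := by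
  rw [edgesAt, Finset.card_biUnion]
  · exact Finset.sum_congr rfl fun e _ => card_incidenceFinset_eq_degree _ _
  · intro e₁ _ e₂ _ hne
    rw [Function.onFun, Finset.disjoint_left]
    intro ε hε1 hε2
    rw [mem_incidenceFinset] at hε1 hε2
    obtain ⟨v, e, rfl, -⟩ := edge_shape H hle hε1.1
    have h1' : e₁ = e := by
      have hx := hε1.2
      rw [Sym2.mem_iff] at hx
      rcases hx with hx | hx
      · exact absurd hx (by simp)
      · exact Sum.inr.inj hx
    have h2' : e₂ = e := by
      have hx := hε2.2
      rw [Sym2.mem_iff] at hx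
      rcases hx with hx | hx
      · exact absurd hx (by simp)
      · exact Sum.inr.inj hx
    exact hne (h1'.trans h2'.symm)

lemma edgesAt_univ {T : SimpleGraph (↥H.V ⊕ ↥H.E)} (hle : T ≤ H.Bip) :
    edgesAt H T Finset.univ = T.edgeFinset := by
  ext ε
  rw [mem_edgesAt, mem_edgeFinset]
  constructor
  · rintro ⟨h1, -⟩
    exact h1
  · intro h1
    obtain ⟨v, e, rfl, -⟩ := edge_shape H hle h1
    exact ⟨h1, e, Finset.mem_univ _, by rw [Sym2.mem_iff]; exact Or.inr rfl⟩

lemma realizes_sum_nat {T : SimpleGraph (↥H.V ⊕ ↥H.E)} {f : β → ℕ} (hreal : H.Realizes T f) :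
    (∑ e ∈ H.E, f e) + 1 = H.V.card := by
  have hcard := hreal.1.2.card_edgeFinset
  have hW : Fintype.card (↥H.V ⊕ ↥H.E) = H.V.card + H.E.card := by
    rw [Fintype.card_sum, Fintype.card_coe, Fintype.card_coe]
  have hedges : T.edgeFinset.card = ∑ e ∈ H.E, (f e + 1) := by
    rw [← edgesAt_univ H hreal.1.1, card_edgesAt H hreal.1.1]
    rw [show (∑ e : ↥H.E, T.degree (Sum.inr e)) = ∑ e : ↥H.E, (f ↑e + 1) from
      Finset.sum_congr rfl fun e _ => realizes_degree H hreal e]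
    exact Finset.sum_coe_sort H.E (fun e => f e + 1)
  rw [Finset.sum_add_distrib, Finset.sum_const, smul_eq_mul, mul_one] at hedges
  omega

lemma realizes_sum_int {T : SimpleGraph (↥H.V ⊕ ↥H.E)} {f : β → ℕ} (hreal : H.Realizes T f) :
    (∑ e ∈ H.E, (f e : ℤ)) = (H.V.card : ℤ) - 1 := by
  have h := realizes_sum_nat H hreal
  have h2 : ((∑ e ∈ H.E, f e : ℕ) : ℤ) + 1 = (H.V.card : ℤ) := by exact_mod_cast h
  push_cast at h2 ⊢
  omega


lemma transfer_step {T : SimpleGraph (↥H.V ⊕ ↥H.E)} {f : β → ℕ} (hreal : H.Realizes T f)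
    {w : ↥H.V} {b : ↥H.E} (hwb : (w : α) ∈ H.incid (b : β))
    (hnadj : ¬ T.Adj (Sum.inl w) (Sum.inr b))
    {p : T.Walk (Sum.inl w) (Sum.inr b)} (hp : p.IsPath)
    {v' : ↥H.V} {a : ↥H.E} (hd : s(Sum.inl v', Sum.inr a) ∈ p.edges) (hab : a ≠ b) :
    H.Realizes (HTAux.swapG T s(Sum.inl v', Sum.inr a) (Sum.inl w) (Sum.inr b))
      (transferFun f ↑a ↑b) ∧ 1 ≤ f ↑a := by
  have hxy : (Sum.inl w : ↥H.V ⊕ ↥H.E) ≠ Sum.inr b := by simp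
  have hdT : T.Adj (Sum.inl v') (Sum.inr a) := by
    have := p.edges_subset_edgeSet hd
    rwa [mem_edgeSet] at this
  have hge1 : 1 ≤ f ↑a := by
    have hsupp : (Sum.inr a : ↥H.V ⊕ ↥H.E) ∈ p.support := p.snd_mem_support_of_mem_edges hd
    have h2 := HTAux.two_le_degree_interior p hp hsupp (by simp) (by simpa using hab)
    rw [realizes_degree H hreal a] at h2
    omega
  have hle' : HTAux.swapG T s(Sum.inl v', Sum.inr a) (Sum.inl w) (Sum.inr b) ≤ H.Bip := by
    intro x y hadj
    rw [HTAux.swapG_adj hxy] at hadj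
    rcases hadj with ⟨h1, -⟩ | ⟨rfl, rfl⟩ | ⟨rfl, rfl⟩
    · exact hreal.1.1 h1
    · exact (bip_adj_inl_inr H).2 hwb
    · exact ((bip_adj_inl_inr H).2 hwb).symm
  have ht' := HTAux.swapG_isTree hreal.1.2 hxy hnadj hp hd
  refine ⟨⟨⟨hle', ht'⟩, ?_, ?_⟩, hge1⟩
  · intro e he
    have hea : e ≠ (↑a : β) := fun h => he (h ▸ a.2)
    have heb : e ≠ (↑b : β) := fun h => he (h ▸ b.2)
    simp only [transferFun, if_neg hea, if_neg heb]
    exact hreal.2.1 e he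
  · intro e
    rw [degr_eq_degree]
    rcases eq_or_ne e b with heq | heb
    · subst heq
      have hpl := HTAux.swapG_degree_plus (T := T) (x := Sum.inl w) (y := Sum.inr e)
        (u := Sum.inl v') (v := Sum.inr a) hxy hnadj (by simp)
        (by simpa using hab.symm)
      rw [hpl, realizes_degree H hreal e]
      have hba : (↑e : β) ≠ ↑a := Subtype.coe_injective.ne hab.symm
      simp [transferFun, hba]
    · rcases eq_or_ne e a with heq | hea
      · subst heq
        have hm := HTAux.swapG_degree_minus (T := T) (x := Sum.inl w) (y := Sum.inr b)
          (u := Sum.inl v') (v := Sum.inr e) hxy hdT (by simp) (by simpa using hab)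
        rw [realizes_degree H hreal e] at hm
        have hval : transferFun f ↑e ↑b ↑e = f ↑e - 1 := by simp [transferFun]
        rw [hval]
        omega
      · have ho := HTAux.swapG_degree_other (T := T) (x := Sum.inl w) (y := Sum.inr b)
          (u := Sum.inl v') (v := Sum.inr a) hxy (z := (Sum.inr e : ↥H.V ⊕ ↥H.E))
          (by simp) (by simpa using heb) (by simp) (by simpa using hea)
        rw [ho, realizes_degree H hreal e]
        have h1 : (↑e : β) ≠ ↑a := Subtype.coe_injective.ne hea
        have h2 : (↑e : β) ≠ ↑b := Subtype.coe_injective.ne heb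
        simp [transferFun, h1, h2]

lemma reroute_step {T : SimpleGraph (↥H.V ⊕ ↥H.E)} {f : β → ℕ} (hreal : H.Realizes T f)
    {w : ↥H.V} {b : ↥H.E} (hwb : (w : α) ∈ H.incid (b : β))
    (hnadj : ¬ T.Adj (Sum.inl w) (Sum.inr b))
    {p : T.Walk (Sum.inl w) (Sum.inr b)} (hp : p.IsPath)
    {v' : ↥H.V} (hd : s(Sum.inl v', Sum.inr b) ∈ p.edges) :
    H.Realizes (HTAux.swapG T s(Sum.inl v', Sum.inr b) (Sum.inl w) (Sum.inr b)) f := by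
  have hxy : (Sum.inl w : ↥H.V ⊕ ↥H.E) ≠ Sum.inr b := by simp
  have hdT : T.Adj (Sum.inl v') (Sum.inr b) := by
    have := p.edges_subset_edgeSet hd
    rwa [mem_edgeSet] at this
  have hv'w : (Sum.inl v' : ↥H.V ⊕ ↥H.E) ≠ Sum.inl w := by
    intro h
    rw [Sum.inl.injEq] at h
    subst h
    exact hnadj hdT
  have hle' : HTAux.swapG T s(Sum.inl v', Sum.inr b) (Sum.inl w) (Sum.inr b) ≤ H.Bip := by
    intro x y hadj
    rw [HTAux.swapG_adj hxy] at hadj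
    rcases hadj with ⟨h1, -⟩ | ⟨rfl, rfl⟩ | ⟨rfl, rfl⟩
    · exact hreal.1.1 h1
    · exact (bip_adj_inl_inr H).2 hwb
    · exact ((bip_adj_inl_inr H).2 hwb).symm
  have ht' := HTAux.swapG_isTree hreal.1.2 hxy hnadj hp hd
  refine ⟨⟨hle', ht'⟩, hreal.2.1, ?_⟩
  intro e
  rw [degr_eq_degree]
  rcases eq_or_ne e b with heq | heb
  · subst heq
    have hbo := HTAux.swapG_degree_both (T := T) (x := Sum.inl w) (y := Sum.inr e)
      (u := Sum.inl v') hxy hnadj hdT hv'w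
    rw [hbo, realizes_degree H hreal e]
  · have ho := HTAux.swapG_degree_other (T := T) (x := Sum.inl w) (y := Sum.inr b)
      (u := Sum.inl v') (v := Sum.inr b) hxy (z := (Sum.inr e : ↥H.V ⊕ ↥H.E))
      (by simp) (by simpa using heb) (by simp) (by simpa using heb)
    rw [ho, realizes_degree H hreal e]


/-- The receiver-fixed exchange lemma: if `h₂ b > h₁ b` for hypertrees `h₁, h₂`, then some
`x` with `h₂ x < h₁ x` can transfer one unit of valence to `b` within `h₁`. -/
lemma exchange_aux : ∀ (n : ℕ) (T₁ T₂ : SimpleGraph (↥H.V ⊕ ↥H.E)) (h₁ h₂ : β → ℕ)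
    (b : ↥H.E), H.Realizes T₁ h₁ → H.Realizes T₂ h₂ →
    (T₁.edgeFinset \ T₂.edgeFinset).card + (T₂.edgeFinset \ T₁.edgeFinset).card ≤ n →
    h₁ ↑b < h₂ ↑b →
    ∃ x : ↥H.E, h₂ ↑x < h₁ ↑x ∧ H.IsHypertree (transferFun h₁ ↑x ↑b) := by
  intro n
  induction n with
  | zero =>
    intro T₁ T₂ h₁ h₂ b hr1 hr2 hm hlt
    exfalso
    have hT : T₁ = T₂ := by
      have c1 : T₁.edgeFinset \ T₂.edgeFinset = ∅ := by
        rw [← Finset.card_eq_zero]; omega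
      have c2 : T₂.edgeFinset \ T₁.edgeFinset = ∅ := by
        rw [← Finset.card_eq_zero]; omega
      rw [Finset.sdiff_eq_empty_iff_subset] at c1 c2
      have := Finset.Subset.antisymm c1 c2
      rwa [edgeFinset_inj] at this
    subst hT
    have e1 := realizes_degree H hr1 b
    have e2 := realizes_degree H hr2 b
    omega
  | succ n ih =>
    intro T₁ T₂ h₁ h₂ b hr1 hr2 hm hlt
    have hdeg : T₁.degree (Sum.inr b) < T₂.degree (Sum.inr b) := by
      rw [realizes_degree H hr1 b, realizes_degree H hr2 b]; omega
    have hex : ∃ z, T₂.Adj (Sum.inr b) z ∧ ¬ T₁.Adj (Sum.inr b) z := by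
      by_contra hcon
      push_neg at hcon
      have hsub : T₂.neighborFinset (Sum.inr b) ⊆ T₁.neighborFinset (Sum.inr b) := by
        intro z hz
        rw [mem_neighborFinset] at hz ⊢
        exact hcon z hz
      have hcard := Finset.card_le_card hsub
      rw [card_neighborFinset_eq_degree, card_neighborFinset_eq_degree] at hcard
      omega
    obtain ⟨z, hadj2, hnadj1⟩ := hex
    obtain ⟨w, e, hm', hcase⟩ := bip_adj_shape H (hr2.1.1 hadj2)
    rcases hcase with ⟨hc1, -⟩ | ⟨hc1, hc2⟩
    · exact absurd hc1 (by simp)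
    rw [Sum.inr.injEq] at hc1
    subst hc1
    subst hc2
    have hnadj1' : ¬ T₁.Adj (Sum.inl w) (Sum.inr b) := fun h => hnadj1 h.symm
    obtain ⟨q0⟩ := hr1.1.2.isConnected.preconnected (Sum.inl w) (Sum.inr b)
    have hp : q0.bypass.IsPath := q0.bypass_isPath
    have hexe : ∃ ε ∈ q0.bypass.edges, ε ∉ T₂.edgeSet := by
      by_contra hcon
      push_neg at hcon
      have hnotmem : s(Sum.inr b, Sum.inl w) ∉ (q0.bypass.transfer T₂ hcon).edges := by
        rw [Walk.edges_transfer]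
        intro hmem
        have h1 := q0.bypass.edges_subset_edgeSet hmem
        rw [mem_edgeSet] at h1
        exact hnadj1 h1
      have hcyc := (Walk.cons_isCycle_iff (q0.bypass.transfer T₂ hcon) hadj2).2
        ⟨hp.transfer hcon, hnotmem⟩
      exact hr2.1.2.IsAcyclic _ hcyc
    obtain ⟨ε, hεp, hεT₂⟩ := hexe
    obtain ⟨v', x₀, hεeq, -⟩ := edge_shape H hr1.1.1 (q0.bypass.edges_subset_edgeSet hεp)
    subst hεeq
    have hβ1 : s(Sum.inl w, Sum.inr b) ∉ T₁.edgeFinset := by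
      rw [mem_edgeFinset, mem_edgeSet]; exact hnadj1'
    have hβ2 : s(Sum.inl w, Sum.inr b) ∈ T₂.edgeFinset := by
      rw [mem_edgeFinset, mem_edgeSet]; exact hadj2.symm
    have hε1 : s(Sum.inl v', Sum.inr x₀) ∈ T₁.edgeFinset := by
      rw [mem_edgeFinset]; exact q0.bypass.edges_subset_edgeSet hεp
    have hε2 : s(Sum.inl v', Sum.inr x₀) ∉ T₂.edgeFinset := by
      rw [mem_edgeFinset]; exact hεT₂
    have hxyne : (Sum.inl w : ↥H.V ⊕ ↥H.E) ≠ Sum.inr b := by simp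
    have hmeas := HTAux.measure_drop hε1 hε2 hβ1 hβ2
    have hEF := HTAux.swapG_edgeFinset (T := T₁) hxyne s(Sum.inl v', Sum.inr x₀)
    rcases eq_or_ne x₀ b with heq | hx₀b
    · subst heq
      have hr1' := reroute_step H hr1 hm' hnadj1' hp hεp
      refine ih _ T₂ h₁ h₂ x₀ hr1' hr2 ?_ hlt
      rw [hEF]
      omega
    · have hts := transfer_step H hr1 hm' hnadj1' hp hεp hx₀b
      by_cases hlt2 : h₂ ↑x₀ < h₁ ↑x₀
      · exact ⟨x₀, hlt2, ⟨_, hts.1⟩⟩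
      · push_neg at hlt2
        have hval : transferFun h₁ ↑x₀ ↑b ↑x₀ = h₁ ↑x₀ - 1 := by simp [transferFun]
        have hge1 := hts.2
        have hlt' : transferFun h₁ ↑x₀ ↑b ↑x₀ < h₂ ↑x₀ := by
          rw [hval]; omega
        obtain ⟨y, hy1, hy2⟩ := ih _ T₂ (transferFun h₁ ↑x₀ ↑b) h₂ x₀ hts.1 hr2
          (by rw [hEF]; omega) hlt'
        have hyx₀ : y ≠ x₀ := by
          intro hxx
          rw [hxx, hval] at hy1
          omega
        have hyb : y ≠ b := by
          intro hxx
          have hx0b' : (↑b : β) ≠ ↑x₀ := Subtype.coe_injective.ne (Ne.symm hx₀b)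
          rw [hxx, show transferFun h₁ ↑x₀ ↑b ↑b = h₁ ↑b + 1 from by
            simp [transferFun, hx0b']] at hy1
          omega
        have hyx₀' : (↑y : β) ≠ ↑x₀ := Subtype.coe_injective.ne hyx₀
        have hyb' : (↑y : β) ≠ ↑b := Subtype.coe_injective.ne hyb
        have hyy : transferFun h₁ ↑x₀ ↑b ↑y = h₁ ↑y := by
          simp [transferFun, hyx₀', hyb']
        rw [hyy] at hy1
        refine ⟨y, hy1, ?_⟩
        have hx0b' : (↑x₀ : β) ≠ ↑b := Subtype.coe_injective.ne hx₀b
        have hfun : transferFun (transferFun h₁ ↑x₀ ↑b) ↑y ↑x₀ = transferFun h₁ ↑y ↑b := by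
          funext t
          simp only [transferFun]
          by_cases ht1 : t = (↑y : β)
          · subst ht1
            simp [hyx₀', hyb']
          · rw [if_neg ht1, if_neg ht1]
            by_cases ht2 : t = (↑x₀ : β)
            · subst ht2
              simp [hx0b']
              omega
            · rw [if_neg ht2, if_neg ht2]
        rw [hfun] at hy2
        exact hy2


/-- The ℓ¹-distance from `g`, summed over the hyperedges. -/
noncomputable def phi (g h : β → ℕ) : ℕ := ∑ e ∈ H.E, ((h e : ℤ) - g e).natAbs

lemma phi_transfer {g f : β → ℕ} {x b : β} (hx : x ∈ H.E) (hb : b ∈ H.E) (hxb : x ≠ b)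
    (hfx : g x < f x) (hfb : f b < g b) :
    phi H g (transferFun f x b) < phi H g f := by
  rw [phi, phi]
  apply Finset.sum_lt_sum
  · intro e he
    rcases eq_or_ne e x with rfl | hex
    · have hval : transferFun f e b e = f e - 1 := by simp [transferFun]
      rw [hval]
      omega
    · rcases eq_or_ne e b with rfl | heb
      · have hval : transferFun f x e e = f e + 1 := by simp [transferFun, Ne.symm hxb]
        rw [hval]
        omega
      · have hval : transferFun f x b e = f e := by simp [transferFun, hex, heb]
        rw [hval]
  · refine ⟨b, hb, ?_⟩
    have hval : transferFun f x b b = f b + 1 := by simp [transferFun, Ne.symm hxb]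
    rw [hval]
    omega

end HTMain




/-- discrete convexity of the set of hypertrees. -/
theorem hypertree_discrete_convexity (H : Hypergraph' α β) (hconn : H.Bip.Connected)
    {ι : Type} (F : ι → β → ℕ) (hF : ∀ i, H.IsHypertree (F i))
    (g : β → ℕ) (hg0 : ∀ e, e ∉ H.E → g e = 0)
    (hgnn : ∀ e ∈ H.E, 0 ≤ g e)
    (hgsum : (∑ e ∈ H.E, (g e : ℤ)) = (H.V.card : ℤ) - 1)
    (hdom : ∀ E' : Finset β, E' ⊆ H.E → E'.Nonempty →
      ∃ i, (∑ e ∈ E', g e) ≤ ∑ e ∈ E', F i e) :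
    H.IsHypertree g := by
  classical
  rcases Finset.eq_empty_or_nonempty H.E with hE | hE
  · -- no hyperedges: `V` is a single vertex and the empty graph is the spanning tree
    have hV1 : H.V.card = 1 := by
      rw [hE, Finset.sum_empty] at hgsum
      omega
    have hW1 : Fintype.card (↥H.V ⊕ ↥H.E) = 1 := by
      rw [Fintype.card_sum, Fintype.card_coe, Fintype.card_coe, hV1, hE]
      simp
    haveI hss : Subsingleton (↥H.V ⊕ ↥H.E) :=
      Fintype.card_le_one_iff_subsingleton.mp (le_of_eq hW1)
    haveI hne : Nonempty (↥H.V ⊕ ↥H.E) := hconn.nonempty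
    refine ⟨⊥, ⟨⟨bot_le, ?_, ?_⟩, hg0, ?_⟩⟩
    · exact Connected.mk fun a b => by rw [Subsingleton.elim a b]
    · intro v c hc
      cases c with
      | nil => exact hc.ne_nil rfl
      | cons h q => simp at h
    · intro e
      rcases e with ⟨x, hx⟩
      rw [hE] at hx
      exact absurd hx (Finset.notMem_empty _)
  · -- main case
    obtain ⟨b0, hb0⟩ := hE
    have hSne : Set.Nonempty {k | ∃ h, H.IsHypertree h ∧ phi H g h = k} := by
      obtain ⟨i0, -⟩ := hdom H.E (le_refl _) ⟨b0, hb0⟩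
      exact ⟨_, F i0, hF i0, rfl⟩
    obtain ⟨f, hf, hphif⟩ := Nat.sInf_mem hSne
    have hmin : ∀ h, H.IsHypertree h →
        sInf {k | ∃ h, H.IsHypertree h ∧ phi H g h = k} ≤ phi H g h :=
      fun h hh => Nat.sInf_le ⟨h, hh, rfl⟩
    obtain ⟨T, hT⟩ := hf
    by_cases hm0 : phi H g f = 0
    · have hfg : f = g := by
        funext e
        by_cases he : e ∈ H.E
        · have := Finset.sum_eq_zero_iff.mp hm0 e he
          omega
        · rw [hT.2.1 e he, hg0 e he]
      exact ⟨T, hfg ▸ hT⟩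
    · exfalso
      have hsumf := realizes_sum_int H hT
      -- a deficit hyperedge exists
      have hdef : ∃ b ∈ H.E, f b < g b := by
        by_contra hcon
        push_neg at hcon
        apply hm0
        rw [phi]
        apply Finset.sum_eq_zero
        intro e he
        have h1 := hcon e he
        -- all terms of ∑ ((f e : ℤ) - g e) are nonneg and the sum is 0
        have hzero : ∀ e ∈ H.E, (f e : ℤ) - g e = 0 := by
          have hsum0 : (∑ e ∈ H.E, ((f e : ℤ) - g e)) = 0 := by
            rw [Finset.sum_sub_distrib, hsumf, hgsum]
            ring
          have hnn : ∀ e ∈ H.E, (0:ℤ) ≤ (f e : ℤ) - g e := by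
            intro e he
            have := hcon e he
            omega
          intro e he
          exact (Finset.sum_eq_zero_iff_of_nonneg hnn).mp hsum0 e he
        have := hzero e he
        omega
      obtain ⟨b, hbE, hbdef⟩ := hdef
      set C : Finset β := H.E.filter (fun x => x = b ∨ H.IsHypertree (transferFun f x b))
        with hCdef
      have hbC : b ∈ C := by
        rw [hCdef, Finset.mem_filter]
        exact ⟨hbE, Or.inl rfl⟩
      have hCsub : C ⊆ H.E := by
        rw [hCdef]; exact Finset.filter_subset _ _
      have hKEY1 : ∀ x ∈ C, f x ≤ g x := by
        intro x hx
        rw [hCdef, Finset.mem_filter] at hx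
        rcases hx.2 with rfl | hht
        · exact le_of_lt hbdef
        · by_contra hgt
          push_neg at hgt
          have hxb : x ≠ b := by
            rintro rfl
            omega
          have hlt := phi_transfer H hx.1 hbE hxb hgt hbdef
          have hle := hmin _ hht
          omega
      obtain ⟨i, hi⟩ := hdom C hCsub ⟨b, hbC⟩
      -- KEY2 : the minimizer maximizes the C-sum among hypertrees
      have hKEY2 : (∑ e ∈ C, F i e) ≤ ∑ e ∈ C, f e := by
        by_contra hgt2
        push_neg at hgt2
        obtain ⟨Ts, hTs⟩ := hF i
        set C' : Finset ↥H.E := Finset.univ.filter (fun e => (e : β) ∈ C) with hC'def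
        have hsum_sub : ∀ (ψ : β → ℕ), (∑ e ∈ C', ψ ↑e) = ∑ x ∈ C, ψ x := by
          intro ψ
          rw [hC'def, Finset.sum_filter,
            Finset.sum_coe_sort H.E (fun x => if x ∈ C then ψ x else 0), ← Finset.sum_filter]
          congr 1
          ext x
          rw [Finset.mem_filter]
          constructor
          · rintro ⟨-, hx⟩
            exact hx
          · intro hx
            exact ⟨hCsub hx, hx⟩
        have hcard1 : (edgesAt H T C').card = (∑ x ∈ C, f x) + C'.card := by
          rw [card_edgesAt H hT.1.1]
          rw [show (∑ e ∈ C', T.degree (Sum.inr e)) = ∑ e ∈ C', (f ↑e + 1) from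
            Finset.sum_congr rfl fun e _ => realizes_degree H hT e]
          rw [Finset.sum_add_distrib, Finset.sum_const, smul_eq_mul, mul_one, hsum_sub]
        have hcard2 : (edgesAt H Ts C').card = (∑ x ∈ C, F i x) + C'.card := by
          rw [card_edgesAt H hTs.1.1]
          rw [show (∑ e ∈ C', Ts.degree (Sum.inr e)) = ∑ e ∈ C', (F i ↑e + 1) from
            Finset.sum_congr rfl fun e _ => realizes_degree H hTs e]
          rw [Finset.sum_add_distrib, Finset.sum_const, smul_eq_mul, mul_one, hsum_sub]
        set GC := fromEdgeSet (↑(edgesAt H T C') : Set (Sym2 (↥H.V ⊕ ↥H.E))) with hGCdef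
        set GCs := fromEdgeSet (↑(edgesAt H Ts C') : Set (Sym2 (↥H.V ⊕ ↥H.E))) with hGCsdef
        have hndiag : ∀ (T₀ : SimpleGraph (↥H.V ⊕ ↥H.E)), ∀ e ∈ edgesAt H T₀ C',
            ¬ e.IsDiag := by
          intro T₀ e he
          rw [mem_edgesAt] at he
          exact T₀.not_isDiag_of_mem_edgeSet he.1
        have hGCle : GC ≤ T := by
          intro a b' hab
          rw [hGCdef, fromEdgeSet_adj] at hab
          have h1 := (mem_edgesAt H).1 (Finset.mem_coe.1 hab.1)
          rw [← mem_edgeSet]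
          exact h1.1
        have hGCsle : GCs ≤ Ts := by
          intro a b' hab
          rw [hGCsdef, fromEdgeSet_adj] at hab
          have h1 := (mem_edgesAt H).1 (Finset.mem_coe.1 hab.1)
          rw [← mem_edgeSet]
          exact h1.1
        -- there must be an `F i`-edge at `C` whose ends are not `GC`-connected
        have hbad : ∃ a b', GCs.Adj a b' ∧ ¬ GC.Reachable a b' := by
          by_contra hcon
          push_neg at hcon
          have h1 := HTAux.ncomp_le_of_rel hcon
          have h2 := HTAux.card_W_le' (edgesAt H T C') (hndiag T)
          have h3 := HTAux.acyclic_card' (edgesAt H Ts C') (hndiag Ts)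
            (HTAux.isAcyclic_mono hGCsle hTs.1.2.IsAcyclic)
          rw [← hGCdef] at h2
          rw [← hGCsdef] at h3
          omega
        obtain ⟨a0, b0', hadjs, hnr⟩ := hbad
        have hmem0 : s(a0, b0') ∈ edgesAt H Ts C' := by
          rw [hGCsdef, fromEdgeSet_adj] at hadjs
          exact Finset.mem_coe.1 hadjs.1
        rw [mem_edgesAt] at hmem0
        obtain ⟨hTsedge, c1, hc1C', hc1mem⟩ := hmem0
        obtain ⟨v₀, c₀, heq0, hm0'⟩ := edge_shape H hTs.1.1 hTsedge
        have hc₀C : (c₀ : β) ∈ C := by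
          have : c1 = c₀ := by
            rw [heq0, Sym2.mem_iff] at hc1mem
            rcases hc1mem with h | h
            · exact absurd h (by simp)
            · exact Sum.inr.inj h
          rw [hC'def, Finset.mem_filter] at hc1C'
          exact this ▸ hc1C'.2
        have hnreach : ¬ GC.Reachable (Sum.inl v₀) (Sum.inr c₀) := by
          intro hr
          rw [Sym2.eq_iff] at heq0
          rcases heq0 with ⟨h1, h2⟩ | ⟨h1, h2⟩
          · subst h1; subst h2
            exact hnr hr
          · subst h1; subst h2
            exact hnr hr.symm
        have hnadjT : ¬ T.Adj (Sum.inl v₀) (Sum.inr c₀) := by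
          intro hadj
          apply hnreach
          apply SimpleGraph.Adj.reachable
          rw [hGCdef, fromEdgeSet_adj]
          refine ⟨Finset.mem_coe.2 ?_, by simp⟩
          rw [mem_edgesAt]
          refine ⟨by rwa [mem_edgeSet], c₀, ?_, by rw [Sym2.mem_iff]; exact Or.inr rfl⟩
          rw [hC'def, Finset.mem_filter]
          exact ⟨Finset.mem_univ _, hc₀C⟩
        obtain ⟨q0⟩ := hT.1.2.isConnected.preconnected (Sum.inl v₀) (Sum.inr c₀)
        have hp : q0.bypass.IsPath := q0.bypass_isPath
        have hexd : ∃ (v₁ : ↥H.V) (a₁ : ↥H.E),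
            s(Sum.inl v₁, Sum.inr a₁) ∈ q0.bypass.edges ∧ (a₁ : β) ∉ C := by
          by_contra hcon
          push_neg at hcon
          have hsub : ∀ ε ∈ q0.bypass.edges, ε ∈ GC.edgeSet := by
            intro ε hε
            obtain ⟨v₁, a₁, rfl, -⟩ := edge_shape H hT.1.1 (q0.bypass.edges_subset_edgeSet hε)
            have haC := hcon v₁ a₁ hε
            rw [hGCdef, edgeSet_fromEdgeSet]
            refine ⟨Finset.mem_coe.2 ?_, by simp⟩
            rw [mem_edgesAt]
            refine ⟨q0.bypass.edges_subset_edgeSet hε, a₁, ?_,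
              by rw [Sym2.mem_iff]; exact Or.inr rfl⟩
            rw [hC'def, Finset.mem_filter]
            exact ⟨Finset.mem_univ _, haC⟩
          exact hnreach ⟨q0.bypass.transfer GC hsub⟩
        obtain ⟨v₁, a₁, hdp, ha₁C⟩ := hexd
        have ha₁c₀ : a₁ ≠ c₀ := by
          intro h
          exact ha₁C (h ▸ hc₀C)
        have hts := transfer_step H hT hm0' hnadjT hp hdp ha₁c₀
        have ha₁E : (a₁ : β) ∈ H.E := a₁.2
        have ha₁b : (a₁ : β) ≠ b := by
          intro h
          exact ha₁C (h ▸ hbC)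
        -- show (a₁ : β) ∈ C, contradiction
        apply ha₁C
        rw [hCdef, Finset.mem_filter]
        refine ⟨ha₁E, Or.inr ?_⟩
        rcases eq_or_ne (c₀ : β) b with hc₀b | hc₀b
        · rw [← hc₀b]
          exact ⟨_, hts.1⟩
        · -- compose two transfers via the exchange lemma
          have hc₀mem : H.IsHypertree (transferFun f ↑c₀ b) := by
            have := hc₀C
            rw [hCdef, Finset.mem_filter] at this
            rcases this.2 with h | h
            · exact absurd h hc₀b
            · exact h
          obtain ⟨Tq, hTq⟩ := hc₀mem
          obtain ⟨Tp, hTp⟩ : H.IsHypertree (transferFun f ↑a₁ ↑c₀) := ⟨_, hts.1⟩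
          have hbhat : b ∈ H.E := hbE
          have hltpq : transferFun f ↑a₁ ↑c₀ ↑(⟨b, hbE⟩ : ↥H.E)
              < transferFun f ↑c₀ b ↑(⟨b, hbE⟩ : ↥H.E) := by
            have h1 : transferFun f ↑a₁ ↑c₀ b = f b := by
              simp [transferFun, Ne.symm ha₁b, Ne.symm hc₀b]
            have h2 : transferFun f ↑c₀ b b = f b + 1 := by
              simp [transferFun, Ne.symm hc₀b]
            simp only [h1, h2]
            omega
          obtain ⟨x, hx1, hx2⟩ := exchange_aux H
            ((Tp.edgeFinset \ Tq.edgeFinset).card + (Tq.edgeFinset \ Tp.edgeFinset).card)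
            Tp Tq _ _ ⟨b, hbE⟩ hTp hTq (le_refl _) hltpq
          have ha₁c₀' : (↑a₁ : β) ≠ ↑c₀ := Subtype.coe_injective.ne ha₁c₀
          have hxc₀ : (x : β) = ↑c₀ := by
            by_contra hxc
            rcases eq_or_ne (x : β) ↑a₁ with hxa | hxa
            · rw [hxa] at hx1
              have h1 : transferFun f ↑a₁ ↑c₀ ↑a₁ = f ↑a₁ - 1 := by
                simp [transferFun]
              have h2 : transferFun f ↑c₀ b ↑a₁ = f ↑a₁ := by
                simp [transferFun, ha₁c₀', ha₁b]
              rw [h1, h2] at hx1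
              omega
            · rcases eq_or_ne (x : β) b with hxb | hxb
              · rw [hxb] at hx1
                have h1 : transferFun f ↑a₁ ↑c₀ b = f b := by
                  simp [transferFun, Ne.symm ha₁b, Ne.symm hc₀b]
                have h2 : transferFun f ↑c₀ b b = f b + 1 := by
                  simp [transferFun, Ne.symm hc₀b]
                rw [h1, h2] at hx1
                omega
              · have h1 : transferFun f ↑a₁ ↑c₀ ↑x = f ↑x := by
                  simp [transferFun, hxa, hxc]
                have h2 : transferFun f ↑c₀ b ↑x = f ↑x := by
                  simp [transferFun, hxc, hxb]
                rw [h1, h2] at hx1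
                omega
          rw [hxc₀] at hx2
          have hge1 := hts.2
          have hfun : transferFun (transferFun f ↑a₁ ↑c₀) ↑c₀ b = transferFun f ↑a₁ b := by
            have hc₀b' : (↑c₀ : β) ≠ b := hc₀b
            have hba₁ : b ≠ (↑a₁ : β) := Ne.symm ha₁b
            have hc₀a₁ : (↑c₀ : β) ≠ ↑a₁ := Ne.symm ha₁c₀'
            funext t
            simp only [transferFun]
            by_cases ht1 : t = (↑c₀ : β)
            · subst ht1
              simp [hc₀a₁, hc₀b']
            · rw [if_neg ht1]
              by_cases ht2 : t = b
              · subst ht2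
                simp [hba₁, Ne.symm hc₀b']
              · rw [if_neg ht2]
                by_cases ht3 : t = (↑a₁ : β)
                · subst ht3
                  simp [ha₁c₀']
                · simp [ht1, ht2, ht3]
          rw [hfun] at hx2
          exact hx2
      have hstrict : (∑ e ∈ C, f e) < ∑ e ∈ C, g e :=
        Finset.sum_lt_sum hKEY1 ⟨b, hbC, hbdef⟩
      omega
end
end

section
/- Let H = (V, E) be a hypergraph. The set function μ on subsets of E defined by μ(E') = |∪E'| − c(E') for non-empty E' ⊆ E and μ(∅) = 0 is non-decreasing (E₁ ⊆ E₂ implies μ(E₁) ≤ μ(E₂)) and submodular: μ(U) + μ(W) ≥ μ(U∩W) + μ(U∪W) for all subsets U, W ⊆ E. -/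
open SimpleGraph Finset
open scoped Classical

noncomputable section

variable {α β : Type} [DecidableEq α] [DecidableEq β]

section GraphAux

variable {X : Type} [Fintype X]

private lemma not_reachable_of_isolated {G : SimpleGraph X} {x z : X}
    (hiso : ∀ y, ¬ G.Adj x y) (hne : x ≠ z) : ¬ G.Reachable x z := by
  intro hr
  obtain ⟨w⟩ := hr
  cases w with
  | nil => exact hne rfl
  | cons hadj _ => exact hiso _ hadj

private lemma ncc_le_of_le {G G' : SimpleGraph X} (h : G ≤ G') :
    Nat.card G'.ConnectedComponent ≤ Nat.card G.ConnectedComponent := by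
  apply Nat.card_le_card_of_surjective
    (SimpleGraph.ConnectedComponent.map (SimpleGraph.Hom.ofLE h))
  intro c
  exact c.ind (fun v => ⟨G.connectedComponentMk v, rfl⟩)

private lemma reach_sup_edge {G : SimpleGraph X} {u v a b : X}
    (h : (G ⊔ SimpleGraph.fromEdgeSet {s(u,v)}).Reachable a b) :
    G.Reachable a b ∨ (G.Reachable a u ∧ G.Reachable v b) ∨
      (G.Reachable a v ∧ G.Reachable u b) := by
  obtain ⟨w⟩ := h
  induction w with
  | nil => exact Or.inl (SimpleGraph.Reachable.refl _)
  | @cons x y z hadj p ih =>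
    rcases hadj with hG | hE
    · rcases ih with h1 | ⟨h1, h2⟩ | ⟨h1, h2⟩
      · exact Or.inl (hG.reachable.trans h1)
      · exact Or.inr (Or.inl ⟨hG.reachable.trans h1, h2⟩)
      · exact Or.inr (Or.inr ⟨hG.reachable.trans h1, h2⟩)
    · rw [SimpleGraph.fromEdgeSet_adj] at hE
      obtain ⟨hmem, hne⟩ := hE
      rw [Set.mem_singleton_iff, Sym2.eq_iff] at hmem
      rcases hmem with ⟨hx, hy⟩ | ⟨hx, hy⟩
      · subst hx; subst hy
        rcases ih with h1 | ⟨h1, h2⟩ | ⟨h1, h2⟩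
        · exact Or.inr (Or.inl ⟨SimpleGraph.Reachable.refl _, h1⟩)
        · exact Or.inl (h1.symm.trans h2)
        · exact Or.inl h2
      · subst hx; subst hy
        rcases ih with h1 | ⟨h1, h2⟩ | ⟨h1, h2⟩
        · exact Or.inr (Or.inr ⟨SimpleGraph.Reachable.refl _, h1⟩)
        · exact Or.inl h2
        · exact Or.inr (Or.inr ⟨SimpleGraph.Reachable.refl _, h2⟩)

private lemma ncc_sup_edge_of_reach {G : SimpleGraph X} {u v : X} (h : G.Reachable u v) :
    Nat.card (G ⊔ SimpleGraph.fromEdgeSet {s(u,v)}).ConnectedComponent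
      = Nat.card G.ConnectedComponent := by
  have hle : G ≤ G ⊔ SimpleGraph.fromEdgeSet {s(u,v)} := le_sup_left
  have hreach : ∀ a b : X, (G ⊔ SimpleGraph.fromEdgeSet {s(u,v)}).Reachable a b →
      G.Reachable a b := by
    intro a b hr
    rcases reach_sup_edge hr with h1 | ⟨h1, h2⟩ | ⟨h1, h2⟩
    · exact h1
    · exact h1.trans (h.trans h2)
    · exact h1.trans (h.symm.trans h2)
  symm
  apply Nat.card_congr
  refine Equiv.ofBijective
    (SimpleGraph.ConnectedComponent.map (SimpleGraph.Hom.ofLE hle)) ⟨?_, ?_⟩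
  · intro c d
    refine SimpleGraph.ConnectedComponent.ind₂ (fun a b hab => ?_) c d
    simp only [SimpleGraph.ConnectedComponent.map_mk] at hab
    exact SimpleGraph.ConnectedComponent.eq.mpr
      (hreach _ _ (SimpleGraph.ConnectedComponent.eq.mp hab))
  · intro c
    exact c.ind (fun w => ⟨G.connectedComponentMk w, rfl⟩)

private lemma nat_card_eq_add_one {A B : Type} [Finite A] (f : A → B)
    (hs : Function.Surjective f) (a₁ a₂ : A) (hne : a₁ ≠ a₂) (heq : f a₁ = f a₂)
    (hinj : ∀ x y, f x = f y → x = y ∨ (x = a₁ ∧ y = a₂) ∨ (x = a₂ ∧ y = a₁)) :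
    Nat.card A = Nat.card B + 1 := by
  have e1 : {x : A // x ≠ a₂} ≃ B := by
    refine Equiv.ofBijective (fun x => f x.1) ⟨?_, ?_⟩
    · rintro ⟨x, hx⟩ ⟨y, hy⟩ hxy
      rcases hinj x y hxy with h | ⟨h1, h2⟩ | ⟨h1, h2⟩
      · exact Subtype.ext h
      · exact absurd h2 hy
      · exact absurd h1 hx
    · intro b
      obtain ⟨a, rfl⟩ := hs b
      by_cases ha : a = a₂
      · exact ⟨⟨a₁, hne⟩, by show f a₁ = f a; rw [heq, ha]⟩
      · exact ⟨⟨a, ha⟩, rfl⟩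
  calc Nat.card A = Nat.card (Option {x : A // x ≠ a₂}) :=
        (Nat.card_congr (Equiv.optionSubtypeNe a₂)).symm
    _ = Nat.card {x : A // x ≠ a₂} + 1 := Finite.card_option
    _ = Nat.card B + 1 := by rw [Nat.card_congr e1]

private lemma ncc_sup_edge_of_not_reach {G : SimpleGraph X} {u v : X}
    (h : ¬ G.Reachable u v) :
    Nat.card G.ConnectedComponent
      = Nat.card (G ⊔ SimpleGraph.fromEdgeSet {s(u,v)}).ConnectedComponent + 1 := by
  have hne : u ≠ v := fun e => h (e ▸ SimpleGraph.Reachable.refl u)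
  have hle : G ≤ G ⊔ SimpleGraph.fromEdgeSet {s(u,v)} := le_sup_left
  set f := SimpleGraph.ConnectedComponent.map (SimpleGraph.Hom.ofLE hle)
    with hf
  have hmk : ∀ w : X, f (G.connectedComponentMk w)
      = (G ⊔ SimpleGraph.fromEdgeSet {s(u,v)}).connectedComponentMk w := fun w => rfl
  have hadj' : (G ⊔ SimpleGraph.fromEdgeSet {s(u,v)}).Adj u v := by
    right
    rw [SimpleGraph.fromEdgeSet_adj]
    exact ⟨rfl, hne⟩
  apply nat_card_eq_add_one f ?_ (G.connectedComponentMk u) (G.connectedComponentMk v)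
  · rw [Ne, SimpleGraph.ConnectedComponent.eq]
    exact h
  · rw [hmk, hmk, SimpleGraph.ConnectedComponent.eq]
    exact hadj'.reachable
  · intro c d
    refine SimpleGraph.ConnectedComponent.ind₂ (fun a b hab => ?_) c d
    rw [hmk, hmk, SimpleGraph.ConnectedComponent.eq] at hab
    rcases reach_sup_edge hab with h1 | ⟨h1, h2⟩ | ⟨h1, h2⟩
    · exact Or.inl (SimpleGraph.ConnectedComponent.eq.mpr h1)
    · exact Or.inr (Or.inl ⟨SimpleGraph.ConnectedComponent.eq.mpr h1,
        SimpleGraph.ConnectedComponent.eq.mpr h2.symm⟩)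
    · exact Or.inr (Or.inr ⟨SimpleGraph.ConnectedComponent.eq.mpr h1,
        SimpleGraph.ConnectedComponent.eq.mpr h2.symm⟩)
  · intro c
    exact c.ind (fun w => ⟨G.connectedComponentMk w, rfl⟩)

private lemma ncc_delta_mono (S : Finset (Sym2 X)) :
    ∀ G H : SimpleGraph X, G ≤ H →
      Nat.card H.ConnectedComponent
          + Nat.card (G ⊔ SimpleGraph.fromEdgeSet ↑S).ConnectedComponent
        ≤ Nat.card G.ConnectedComponent
          + Nat.card (H ⊔ SimpleGraph.fromEdgeSet ↑S).ConnectedComponent := by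
  classical
  induction S using Finset.induction with
  | empty =>
    intro G H hGH
    simp only [Finset.coe_empty, SimpleGraph.fromEdgeSet_empty, sup_bot_eq]
    omega
  | @insert ε S hε ih =>
    intro G H hGH
    induction ε using Sym2.ind with
    | _ u v =>
      have hcoe : (↑(insert s(u,v) S) : Set (Sym2 X)) = {s(u,v)} ∪ ↑S := by
        rw [Finset.coe_insert, Set.insert_eq]
      rw [hcoe, SimpleGraph.fromEdgeSet_union]
      have hGr : G ⊔ (SimpleGraph.fromEdgeSet {s(u,v)} ⊔ SimpleGraph.fromEdgeSet ↑S)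
          = (G ⊔ SimpleGraph.fromEdgeSet ↑S) ⊔ SimpleGraph.fromEdgeSet {s(u,v)} := by
        rw [sup_comm (SimpleGraph.fromEdgeSet {s(u,v)}) (SimpleGraph.fromEdgeSet ↑S),
          ← sup_assoc]
      have hHr : H ⊔ (SimpleGraph.fromEdgeSet {s(u,v)} ⊔ SimpleGraph.fromEdgeSet ↑S)
          = (H ⊔ SimpleGraph.fromEdgeSet ↑S) ⊔ SimpleGraph.fromEdgeSet {s(u,v)} := by
        rw [sup_comm (SimpleGraph.fromEdgeSet {s(u,v)}) (SimpleGraph.fromEdgeSet ↑S),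
          ← sup_assoc]
      rw [hGr, hHr]
      have hmono : (G ⊔ SimpleGraph.fromEdgeSet ↑S) ≤ (H ⊔ SimpleGraph.fromEdgeSet ↑S) :=
        sup_le_sup_right hGH _
      have key := ih G H hGH
      by_cases hrG : (G ⊔ SimpleGraph.fromEdgeSet ↑S).Reachable u v
      · have hrH : (H ⊔ SimpleGraph.fromEdgeSet ↑S).Reachable u v := hrG.mono hmono
        rw [ncc_sup_edge_of_reach hrG, ncc_sup_edge_of_reach hrH]
        exact key
      · have e1 := ncc_sup_edge_of_not_reach hrG
        by_cases hrH : (H ⊔ SimpleGraph.fromEdgeSet ↑S).Reachable u v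
        · rw [ncc_sup_edge_of_reach hrH]
          omega
        · have e2 := ncc_sup_edge_of_not_reach hrH
          omega

private lemma ncc_supermodular (G H : SimpleGraph X) :
    Nat.card G.ConnectedComponent + Nat.card H.ConnectedComponent
      ≤ Nat.card (G ⊓ H).ConnectedComponent + Nat.card (G ⊔ H).ConnectedComponent := by
  classical
  have hfin : G.edgeSet.Finite := Set.toFinite _
  have h := ncc_delta_mono hfin.toFinset (G ⊓ H) H inf_le_right
  rw [Set.Finite.coe_toFinset, SimpleGraph.fromEdgeSet_edgeSet,
    sup_eq_right.mpr (inf_le_left : G ⊓ H ≤ G), sup_comm H G] at h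
  omega

private lemma ncc_embed {Y : Type} [Fintype Y] (φ : Y → X) (hφ : Function.Injective φ)
    (G : SimpleGraph Y) (G' : SimpleGraph X)
    (hAdj : ∀ a b, G.Adj a b ↔ G'.Adj (φ a) (φ b))
    (hIso : ∀ x, x ∉ Set.range φ → ∀ y, ¬ G'.Adj x y) :
    Nat.card G'.ConnectedComponent + Fintype.card Y
      = Nat.card G.ConnectedComponent + Fintype.card X := by
  classical
  have hwalk : ∀ {x y : X}, G'.Walk x y → ∀ a : Y, x = φ a →
      ∃ b : Y, y = φ b ∧ G.Reachable a b := by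
    intro x y w
    induction w with
    | nil => exact fun a ha => ⟨a, ha, SimpleGraph.Reachable.refl _⟩
    | @cons x y z hadj p ih =>
      intro a ha
      have hy : y ∈ Set.range φ := by
        by_contra hy
        exact hIso y hy x hadj.symm
      obtain ⟨a₁, rfl⟩ := hy
      obtain ⟨b, hb, hr⟩ := ih a₁ rfl
      subst ha
      exact ⟨b, hb, (SimpleGraph.Adj.reachable ((hAdj a a₁).2 hadj)).trans hr⟩
  let hom : G →g G' := ⟨φ, fun h => (hAdj _ _).1 h⟩
  have homapp : ∀ a, hom a = φ a := fun _ => rfl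
  have e : (G.ConnectedComponent ⊕ ↥(Set.range φ)ᶜ) ≃ G'.ConnectedComponent := by
    refine Equiv.ofBijective
      (Sum.elim (SimpleGraph.ConnectedComponent.map hom)
        (fun x => G'.connectedComponentMk x.1)) ⟨?_, ?_⟩
    · rintro (c | x) (d | y) hcd
      · revert hcd
        refine SimpleGraph.ConnectedComponent.ind₂ (fun a b hab => ?_) c d
        simp only [Sum.elim_inl, SimpleGraph.ConnectedComponent.map_mk, homapp] at hab
        have hr := SimpleGraph.ConnectedComponent.eq.mp hab
        obtain ⟨w⟩ := hr
        obtain ⟨b', hb', hr'⟩ := hwalk w a rfl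
        have : b' = b := hφ hb'.symm
        subst this
        exact congrArg Sum.inl (SimpleGraph.ConnectedComponent.eq.mpr hr')
      · exfalso
        revert hcd
        refine SimpleGraph.ConnectedComponent.ind (fun a hab => ?_) c
        simp only [Sum.elim_inl, Sum.elim_inr, SimpleGraph.ConnectedComponent.map_mk, homapp] at hab
        obtain ⟨w⟩ := SimpleGraph.ConnectedComponent.eq.mp hab
        obtain ⟨b', hb', _⟩ := hwalk w a rfl
        exact y.2 ⟨b', hb'.symm⟩
      · exfalso
        revert hcd
        refine SimpleGraph.ConnectedComponent.ind (fun b hab => ?_) d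
        simp only [Sum.elim_inl, Sum.elim_inr, SimpleGraph.ConnectedComponent.map_mk, homapp] at hab
        have hr := SimpleGraph.ConnectedComponent.eq.mp hab
        have hne : (x : X) ≠ φ b := fun hx => x.2 ⟨b, hx.symm⟩
        exact not_reachable_of_isolated (hIso x.1 x.2) hne hr
      · by_cases hxy : (x : X) = (y : X)
        · exact congrArg Sum.inr (Subtype.ext hxy)
        · exfalso
          simp only [Sum.elim_inr] at hcd
          exact not_reachable_of_isolated (hIso x.1 x.2) hxy
            (SimpleGraph.ConnectedComponent.eq.mp hcd)
    · intro c
      refine c.ind (fun x => ?_)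
      by_cases hx : x ∈ Set.range φ
      · obtain ⟨a, rfl⟩ := hx
        exact ⟨Sum.inl (G.connectedComponentMk a),
          by simp only [Sum.elim_inl, SimpleGraph.ConnectedComponent.map_mk, homapp]⟩
      · exact ⟨Sum.inr ⟨x, hx⟩, rfl⟩
  have h1 : Nat.card G'.ConnectedComponent
      = Nat.card G.ConnectedComponent + Nat.card ↥(Set.range φ)ᶜ := by
    rw [← Nat.card_congr e, Nat.card_sum]
  have h2 : Nat.card ↥(Set.range φ) + Nat.card ↥(Set.range φ)ᶜ = Fintype.card X := by
    rw [← Nat.card_sum, Nat.card_congr (Equiv.Set.sumCompl (Set.range φ)),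
      Nat.card_eq_fintype_card]
  have h3 : Nat.card ↥(Set.range φ) = Fintype.card Y := by
    rw [← Nat.card_congr (Equiv.ofInjective φ hφ), Nat.card_eq_fintype_card]
  omega

end GraphAux

section HyperAux

variable (H : Hypergraph' α β)

private def relOn (U : Finset β) (x y : ↥H.V ⊕ ↥H.E) : Prop :=
  ∃ (v : ↥H.V) (e : ↥H.E), x = Sum.inl v ∧ y = Sum.inr e ∧ (e : β) ∈ U ∧
    (v : α) ∈ H.incid (e : β)

private def fullG (U : Finset β) : SimpleGraph (↥H.V ⊕ ↥H.E) :=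
  SimpleGraph.fromRel (relOn H U)

private lemma mu_eq (U : Finset β) (hU : U ⊆ H.E) :
    H.mu U = (Fintype.card (↥H.V ⊕ ↥H.E) : ℤ) - (U.card : ℤ)
      - (Nat.card (fullG H U).ConnectedComponent : ℤ) := by
  classical
  have hVsub : ∀ v ∈ U.biUnion H.incid, v ∈ H.V := by
    intro v hv
    obtain ⟨e, he, hve⟩ := Finset.mem_biUnion.1 hv
    exact H.incid_sub e (hU he) hve
  set φ : (↥(U.biUnion H.incid) ⊕ ↥U) → (↥H.V ⊕ ↥H.E) :=
    Sum.map (fun v => ⟨v.1, hVsub v.1 v.2⟩) (fun e => ⟨e.1, hU e.2⟩) with hφdef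
  have hφinj : Function.Injective φ := by
    rintro (a | a) (b | b) h <;>
      simp only [hφdef, Sum.map_inl, Sum.map_inr, Sum.inl.injEq, Sum.inr.injEq,
        Subtype.mk.injEq, reduceCtorEq] at h
    · exact congrArg Sum.inl (Subtype.ext h)
    · exact congrArg Sum.inr (Subtype.ext h)
  have hAdj : ∀ a b, (H.BipOn U).Adj a b ↔ (fullG H U).Adj (φ a) (φ b) := by
    have hrel : ∀ a b, (∃ (v : ↥(U.biUnion H.incid)) (e : ↥U),
        a = Sum.inl v ∧ b = Sum.inr e ∧ (v : α) ∈ H.incid (e : β))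
        ↔ relOn H U (φ a) (φ b) := by
      intro a b
      constructor
      · rintro ⟨v, e, rfl, rfl, hve⟩
        exact ⟨⟨v.1, hVsub v.1 v.2⟩, ⟨e.1, hU e.2⟩, rfl, rfl, e.2, hve⟩
      · rintro ⟨v', e', hx, hy, heU, hv'e'⟩
        rcases a with w | w
        · rcases b with f | f
          · exact absurd hy (by simp [hφdef])
          · have hw : (v' : α) = (w : α) := by
              have := hx
              simp only [hφdef, Sum.map_inl, Sum.inl.injEq] at this
              rw [← this]
            have hf : (e' : β) = (f : β) := by
              have := hy
              simp only [hφdef, Sum.map_inr, Sum.inr.injEq] at this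
              rw [← this]
            exact ⟨w, f, rfl, rfl, by rwa [← hw, ← hf]⟩
        · exact absurd hx (by simp [hφdef])
    intro a b
    rw [Hypergraph'.BipOn, fullG, SimpleGraph.fromRel_adj, SimpleGraph.fromRel_adj]
    constructor
    · rintro ⟨hne, hr | hr⟩
      · exact ⟨fun h => hne (hφinj h), Or.inl ((hrel a b).1 hr)⟩
      · exact ⟨fun h => hne (hφinj h), Or.inr ((hrel b a).1 hr)⟩
    · rintro ⟨hne, hr | hr⟩
      · exact ⟨fun h => hne (congrArg φ h), Or.inl ((hrel a b).2 hr)⟩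
      · exact ⟨fun h => hne (congrArg φ h), Or.inr ((hrel b a).2 hr)⟩
  have hIso : ∀ x, x ∉ Set.range φ → ∀ y, ¬ (fullG H U).Adj x y := by
    intro x hx y hadj
    rw [fullG, SimpleGraph.fromRel_adj] at hadj
    apply hx
    rcases hadj.2 with ⟨v', e', rfl, _, heU, hv'e'⟩ | ⟨v', e', _, rfl, heU, hv'e'⟩
    · have hmem : (v' : α) ∈ U.biUnion H.incid :=
        Finset.mem_biUnion.2 ⟨e'.1, heU, hv'e'⟩
      exact ⟨Sum.inl ⟨v'.1, hmem⟩, by simp [hφdef]⟩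
    · exact ⟨Sum.inr ⟨e'.1, heU⟩, by simp [hφdef]⟩
  have key := ncc_embed φ hφinj (H.BipOn U) (fullG H U) hAdj hIso
  rw [Fintype.card_sum, Fintype.card_coe, Fintype.card_coe] at key
  have hcc : H.compCount U = Nat.card (H.BipOn U).ConnectedComponent := rfl
  rw [Hypergraph'.mu, hcc]
  have key' := key
  zify at key'
  linarith

private lemma fullG_mono {U W : Finset β} (h : U ⊆ W) : fullG H U ≤ fullG H W := by
  intro a b hab
  rw [fullG, SimpleGraph.fromRel_adj] at hab ⊢
  refine ⟨hab.1, ?_⟩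
  rcases hab.2 with ⟨v, e, h1, h2, h3, h4⟩ | ⟨v, e, h1, h2, h3, h4⟩
  · exact Or.inl ⟨v, e, h1, h2, h h3, h4⟩
  · exact Or.inr ⟨v, e, h1, h2, h h3, h4⟩

private lemma fullG_inf (U W : Finset β) : fullG H (U ∩ W) = fullG H U ⊓ fullG H W := by
  apply le_antisymm
  · exact le_inf (fullG_mono H Finset.inter_subset_left)
      (fullG_mono H Finset.inter_subset_right)
  · intro a b hab
    obtain ⟨habU, habW⟩ := hab
    rw [fullG, SimpleGraph.fromRel_adj] at habU habW ⊢
    refine ⟨habU.1, ?_⟩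
    rcases habU.2 with ⟨v, e, h1, h2, h3, h4⟩ | ⟨v, e, h1, h2, h3, h4⟩
    · rcases habW.2 with ⟨v', e', h1', h2', h3', h4'⟩ | ⟨v', e', h1', h2', h3', h4'⟩
      · have : e = e' := by rw [h2] at h2'; exact Sum.inr.inj h2'
        subst this
        exact Or.inl ⟨v, e, h1, h2, Finset.mem_inter.2 ⟨h3, h3'⟩, h4⟩
      · exfalso; rw [h1] at h2'; simp at h2'
    · rcases habW.2 with ⟨v', e', h1', h2', h3', h4'⟩ | ⟨v', e', h1', h2', h3', h4'⟩
      · exfalso; rw [h1'] at h2; simp at h2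
      · have : e = e' := by rw [h2] at h2'; exact Sum.inr.inj h2'
        subst this
        exact Or.inr ⟨v, e, h1, h2, Finset.mem_inter.2 ⟨h3, h3'⟩, h4⟩

private lemma fullG_sup (U W : Finset β) : fullG H (U ∪ W) = fullG H U ⊔ fullG H W := by
  apply le_antisymm
  · intro a b hab
    rw [fullG, SimpleGraph.fromRel_adj] at hab
    rcases hab.2 with ⟨v, e, h1, h2, h3, h4⟩ | ⟨v, e, h1, h2, h3, h4⟩
    · rcases Finset.mem_union.1 h3 with h3 | h3
      · exact Or.inl ⟨hab.1, Or.inl ⟨v, e, h1, h2, h3, h4⟩⟩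
      · exact Or.inr ⟨hab.1, Or.inl ⟨v, e, h1, h2, h3, h4⟩⟩
    · rcases Finset.mem_union.1 h3 with h3 | h3
      · exact Or.inl ⟨hab.1, Or.inr ⟨v, e, h1, h2, h3, h4⟩⟩
      · exact Or.inr ⟨hab.1, Or.inr ⟨v, e, h1, h2, h3, h4⟩⟩
  · exact sup_le (fullG_mono H Finset.subset_union_left)
      (fullG_mono H Finset.subset_union_right)

private lemma fullG_step (U : Finset β) {e : β} (he : e ∈ H.E) (heU : e ∉ U) :
    Nat.card (fullG H (insert e U)).ConnectedComponent + 1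
      ≤ Nat.card (fullG H U).ConnectedComponent := by
  obtain ⟨v, hv⟩ := H.incid_nonempty e he
  have hvV : v ∈ H.V := H.incid_sub e he hv
  set x : ↥H.V ⊕ ↥H.E := Sum.inl ⟨v, hvV⟩ with hxdef
  set y : ↥H.V ⊕ ↥H.E := Sum.inr ⟨e, he⟩ with hydef
  have hiso : ∀ z, ¬ (fullG H U).Adj y z := by
    intro z hadj
    rw [fullG, SimpleGraph.fromRel_adj] at hadj
    rcases hadj.2 with ⟨v', e', h1, h2, h3, h4⟩ | ⟨v', e', h1, h2, h3, h4⟩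
    · exact absurd h1 (by simp [hydef])
    · have : (⟨e, he⟩ : ↥H.E) = e' := by
        rw [hydef] at h2; exact Sum.inr.inj h2
      rw [← this] at h3
      exact heU h3
  have hne : y ≠ x := by simp [hxdef, hydef]
  have hnr : ¬ (fullG H U).Reachable y x := not_reachable_of_isolated hiso hne
  have hcount := ncc_sup_edge_of_not_reach hnr
  have hle : fullG H U ⊔ SimpleGraph.fromEdgeSet {s(y,x)} ≤ fullG H (insert e U) := by
    apply sup_le (fullG_mono H (Finset.subset_insert e U))
    intro a b hab
    rw [SimpleGraph.fromEdgeSet_adj, Set.mem_singleton_iff, Sym2.eq_iff] at hab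
    rw [fullG, SimpleGraph.fromRel_adj]
    obtain ⟨hmem, hne'⟩ := hab
    have hrel : relOn H (insert e U) x y :=
      ⟨⟨v, hvV⟩, ⟨e, he⟩, rfl, rfl, Finset.mem_insert_self e U, hv⟩
    rcases hmem with ⟨rfl, rfl⟩ | ⟨rfl, rfl⟩
    · exact ⟨hne', Or.inr hrel⟩
    · exact ⟨hne', Or.inl hrel⟩
  have hle2 := ncc_le_of_le hle
  omega

private lemma mono_aux (S : Finset β) : ∀ U : Finset β, S ⊆ H.E →
    (U ∪ S).card + Nat.card (fullG H (U ∪ S)).ConnectedComponent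
      ≤ U.card + Nat.card (fullG H U).ConnectedComponent := by
  classical
  induction S using Finset.induction with
  | empty => intro U _; simp
  | @insert e S he ih =>
    intro U hS
    have heE : e ∈ H.E := hS (Finset.mem_insert_self e S)
    have hSE : S ⊆ H.E := fun x hx => hS (Finset.mem_insert_of_mem hx)
    rw [Finset.union_insert]
    by_cases heUS : e ∈ U ∪ S
    · rw [Finset.insert_eq_self.2 heUS]
      exact ih U hSE
    · have h1 := fullG_step H (U ∪ S) heE heUS
      have h2 := ih U hSE
      rw [Finset.card_insert_of_notMem heUS]
      omega

end HyperAux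

/-- `μ(E') = |∪E'| − c(E')`, `μ(∅) = 0`, is non-decreasing and
submodular on the set of hyperedges. -/
theorem mu_monotone_submodular (H : Hypergraph' α β) :
    H.mu ∅ = 0 ∧
    (∀ E₁ E₂ : Finset β, E₁ ⊆ E₂ → E₂ ⊆ H.E → H.mu E₁ ≤ H.mu E₂) ∧
    (∀ U W : Finset β, U ⊆ H.E → W ⊆ H.E →
      H.mu (U ∩ W) + H.mu (U ∪ W) ≤ H.mu U + H.mu W) := by
  classical
  refine ⟨?_, ?_, ?_⟩
  · -- μ(∅) = 0
    have hempty : IsEmpty (↥((∅ : Finset β).biUnion H.incid) ⊕ ↥(∅ : Finset β)) := by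
      constructor
      rintro (⟨v, hv⟩ | ⟨e, he⟩)
      · simp at hv
      · simp at he
    have hccempty : IsEmpty (H.BipOn ∅).ConnectedComponent :=
      ⟨fun c => c.ind (fun w => hempty.elim w)⟩
    rw [Hypergraph'.mu, Hypergraph'.compCount]
    rw [Nat.card_of_isEmpty]
    simp
  · -- monotone
    intro E₁ E₂ h12 h2E
    have h1E : E₁ ⊆ H.E := h12.trans h2E
    have hunion : E₁ ∪ (E₂ \ E₁) = E₂ := Finset.union_sdiff_of_subset h12
    have hdiff : E₂ \ E₁ ⊆ H.E := (Finset.sdiff_subset).trans h2E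
    have key := mono_aux H (E₂ \ E₁) E₁ hdiff
    rw [hunion] at key
    rw [mu_eq H E₁ h1E, mu_eq H E₂ h2E]
    have : (E₂.card : ℤ) + (Nat.card (fullG H E₂).ConnectedComponent : ℤ)
        ≤ (E₁.card : ℤ) + (Nat.card (fullG H E₁).ConnectedComponent : ℤ) := by
      exact_mod_cast key
    linarith
  · -- submodular
    intro U W hU hW
    have hUW : U ∩ W ⊆ H.E := Finset.inter_subset_left.trans hU
    have hUuW : U ∪ W ⊆ H.E := Finset.union_subset hU hW
    rw [mu_eq H U hU, mu_eq H W hW, mu_eq H (U ∩ W) hUW, mu_eq H (U ∪ W) hUuW,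
      fullG_inf, fullG_sup]
    have hsm := ncc_supermodular (fullG H U) (fullG H W)
    have hcards := Finset.card_inter_add_card_union U W
    have hsm' : (Nat.card (fullG H U).ConnectedComponent : ℤ)
        + (Nat.card (fullG H W).ConnectedComponent : ℤ)
        ≤ (Nat.card (fullG H U ⊓ fullG H W).ConnectedComponent : ℤ)
          + (Nat.card (fullG H U ⊔ fullG H W).ConnectedComponent : ℤ) := by
      exact_mod_cast hsm
    have hcards' : ((U ∩ W).card : ℤ) + ((U ∪ W).card : ℤ) = (U.card : ℤ) + (W.card : ℤ) := by
      exact_mod_cast hcards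
    linarith
end
end

section
/- Let H = (V, E) be a hypergraph with Bip H connected, let the spanning tree Γ of Bip H induce the hypertree f : E → ℕ, and let E' ⊆ E be non-empty. Then Σ_{e∈E'} f(e) = |∪E'| − c(E') holds if and only if Γ ∩ Bip H|_{E'} is a spanning forest of Bip H|_{E'}. Moreover, given such Γ and E', if Γ ∩ Bip H|_{E'} is removed from Γ and replaced by any other spanning forest F of Bip H|_{E'}, the result is again a spanning tree of Bip H, and the hypertree it realizes agrees with f on E ∖ E'. -/
open SimpleGraph Finset
open scoped Classical

noncomputable section

variable {α β : Type} [DecidableEq α] [DecidableEq β]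

/-- The subgraph of `Bip H` consisting of the edges incident with hyperedges in `E'`
(this is `Bip H |_{E'}` viewed inside the big vertex set). -/
def Hypergraph'.bigRestrict (H : Hypergraph' α β) (E' : Finset β) :
    SimpleGraph (↥H.V ⊕ ↥H.E) :=
  SimpleGraph.fromRel (fun x y =>
    ∃ (v : ↥H.V) (e : ↥H.E), x = Sum.inl v ∧ y = Sum.inr e ∧
      (e : β) ∈ E' ∧ (v : α) ∈ H.incid (e : β))

/-- `F` is a spanning forest (maximal cycle-free subgraph) of `G`: it is an acyclic
subgraph preserving reachability. -/
def IsSpanningForest {W : Type} (G F : SimpleGraph W) : Prop :=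
  F ≤ G ∧ F.IsAcyclic ∧ ∀ x y : W, G.Reachable x y → F.Reachable x y

set_option linter.unusedSectionVars false

namespace ForestAux
variable {W : Type}

lemma reach_split {G : SimpleGraph W} {a b : W} {x y : W}
    (h : G.Reachable x y) :
    (G.deleteEdges {s(a,b)}).Reachable x y ∨
    ((G.deleteEdges {s(a,b)}).Reachable x a ∧ (G.deleteEdges {s(a,b)}).Reachable b y) ∨
    ((G.deleteEdges {s(a,b)}).Reachable x b ∧ (G.deleteEdges {s(a,b)}).Reachable a y) := by
  obtain ⟨w⟩ := h
  induction w with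
  | nil => exact Or.inl (Reachable.refl _)
  | @cons u v z hadj p ih =>
    by_cases he : s(u, v) = s(a, b)
    · rw [Sym2.eq_iff] at he
      rcases he with ⟨rfl, rfl⟩ | ⟨rfl, rfl⟩
      · rcases ih with h1 | ⟨h2, h3⟩ | ⟨h2, h3⟩
        · exact Or.inr (Or.inl ⟨Reachable.refl _, h1⟩)
        · exact Or.inr (Or.inl ⟨Reachable.refl _, h3⟩)
        · exact Or.inl (h3)
      · rcases ih with h1 | ⟨h2, h3⟩ | ⟨h2, h3⟩
        · exact Or.inr (Or.inr ⟨Reachable.refl _, h1⟩)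
        · exact Or.inl h3
        · exact Or.inr (Or.inr ⟨Reachable.refl _, h3⟩)
    · have hadj' : (G.deleteEdges {s(a,b)}).Adj u v := by
        rw [deleteEdges_adj]
        exact ⟨hadj, by simpa using he⟩
      rcases ih with h1 | ⟨h2, h3⟩ | ⟨h2, h3⟩
      · exact Or.inl (hadj'.reachable.trans h1)
      · exact Or.inr (Or.inl ⟨hadj'.reachable.trans h2, h3⟩)
      · exact Or.inr (Or.inr ⟨hadj'.reachable.trans h2, h3⟩)

def psi {A B : SimpleGraph W} (h : A ≤ B) : A.ConnectedComponent → B.ConnectedComponent :=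
  ConnectedComponent.map (Hom.ofLE h)

@[simp] lemma psi_mk {A B : SimpleGraph W} (h : A ≤ B) (v : W) :
    psi h (A.connectedComponentMk v) = B.connectedComponentMk v := rfl

lemma reach_of_adj_imp {A C : SimpleGraph W} (h : ∀ u v, A.Adj u v → C.Reachable u v)
    {x y : W} (hr : A.Reachable x y) : C.Reachable x y := by
  obtain ⟨w⟩ := hr
  induction w with
  | nil => exact Reachable.refl _
  | cons hadj p ih => exact (h _ _ hadj).trans ih

lemma psi_surjective {A B : SimpleGraph W} (h : A ≤ B) : Function.Surjective (psi h) := by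
  intro c
  induction c using SimpleGraph.ConnectedComponent.ind with
  | _ v => exact ⟨A.connectedComponentMk v, rfl⟩

section del
variable (G : SimpleGraph W) (a b : W)

abbrev Gdel : SimpleGraph W := G.deleteEdges {s(a,b)}

/-- The map used to compare components of `G` minus an edge with those of `G`. -/
def Phi : (Gdel G a b).ConnectedComponent → G.ConnectedComponent ⊕ Unit :=
  fun c => if c = (Gdel G a b).connectedComponentMk b then Sum.inr ()
    else Sum.inl (psi (deleteEdges_le _) c)

lemma Phi_injective : Function.Injective (Phi G a b) := by
  intro c1 c2 h
  induction c1 using SimpleGraph.ConnectedComponent.ind with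
  | _ x =>
  induction c2 using SimpleGraph.ConnectedComponent.ind with
  | _ y =>
  unfold Phi at h
  split_ifs at h with h1 h2 h2
  · rw [h1, h2]
  all_goals simp only [Sum.inl.injEq, psi_mk, ConnectedComponent.eq, reduceCtorEq] at h
  rcases reach_split (a := a) (b := b) h with h3 | ⟨h3, h4⟩ | ⟨h3, h4⟩
  · exact ConnectedComponent.sound h3
  · exact absurd (ConnectedComponent.sound h4.symm) h2
  · exact absurd (ConnectedComponent.sound h3) h1

lemma Phi_surjective (hab : G.Adj a b) (hnr : ¬ (Gdel G a b).Reachable a b) :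
    Function.Surjective (Phi G a b) := by
  rintro (c | ⟨⟩)
  · induction c using SimpleGraph.ConnectedComponent.ind with
    | _ x =>
    by_cases hxb : (Gdel G a b).connectedComponentMk x = (Gdel G a b).connectedComponentMk b
    · refine ⟨(Gdel G a b).connectedComponentMk a, ?_⟩
      unfold Phi
      rw [if_neg (fun h => hnr (ConnectedComponent.exact h))]
      simp only [psi_mk, Sum.inl.injEq]
      have : G.Reachable x b := (ConnectedComponent.exact hxb).mono (deleteEdges_le _)
      exact ConnectedComponent.sound (hab.reachable.trans this.symm)
    · exact ⟨(Gdel G a b).connectedComponentMk x, by unfold Phi; rw [if_neg hxb]; simp⟩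
  · exact ⟨(Gdel G a b).connectedComponentMk b, by unfold Phi; rw [if_pos rfl]⟩


end del

section counting
variable [Fintype W]

lemma card_comps_del_nonbridge (G : SimpleGraph W) (a b : W)
    (hr : (Gdel G a b).Reachable a b) :
    Nat.card (Gdel G a b).ConnectedComponent = Nat.card G.ConnectedComponent := by
  refine Nat.card_eq_of_bijective (psi (deleteEdges_le _)) ⟨?_, psi_surjective _⟩
  intro c1 c2 h
  induction c1 using SimpleGraph.ConnectedComponent.ind with
  | _ x =>
  induction c2 using SimpleGraph.ConnectedComponent.ind with
  | _ y =>
  simp only [psi_mk, ConnectedComponent.eq] at h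
  rcases reach_split (a := a) (b := b) h with h3 | ⟨h3, h4⟩ | ⟨h3, h4⟩
  · exact ConnectedComponent.sound h3
  · exact ConnectedComponent.sound ((h3.trans hr).trans h4)
  · exact ConnectedComponent.sound ((h3.trans hr.symm).trans h4)

lemma card_comps_del_bridge (G : SimpleGraph W) (a b : W) (hab : G.Adj a b)
    (hnr : ¬ (Gdel G a b).Reachable a b) :
    Nat.card (Gdel G a b).ConnectedComponent = Nat.card G.ConnectedComponent + 1 := by
  have := Nat.card_eq_of_bijective (Phi G a b) ⟨Phi_injective G a b, Phi_surjective G a b hab hnr⟩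
  simpa [Nat.card_sum] using this

lemma isAcyclic_mono {A B : SimpleGraph W} (h : A ≤ B) (hB : B.IsAcyclic) : A.IsAcyclic :=
  fun _ c hc => hB (c.mapLe h) (hc.mapLe h)

lemma card_comps_add_edges_aux (n : ℕ) : ∀ G : SimpleGraph W, G.edgeSet.ncard = n →
    Nat.card W ≤ Nat.card G.ConnectedComponent + n ∧
    (G.IsAcyclic ↔ Nat.card W = Nat.card G.ConnectedComponent + n) := by
  induction n with
  | zero =>
    intro G hG
    have hbot : G = ⊥ := by
      rw [← edgeSet_eq_empty]
      exact (Set.ncard_eq_zero (Set.toFinite _)).mp hG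
    subst hbot
    have hcard : Nat.card (⊥ : SimpleGraph W).ConnectedComponent = Nat.card W := by
      refine (Nat.card_eq_of_bijective (⊥ : SimpleGraph W).connectedComponentMk ⟨?_, ?_⟩).symm
      · intro x y h
        exact reachable_bot.mp (ConnectedComponent.exact h)
      · intro c
        induction c using SimpleGraph.ConnectedComponent.ind with
        | _ v => exact ⟨v, rfl⟩
    rw [hcard]
    exact ⟨by omega, ⟨fun _ => by omega, fun _ => isAcyclic_bot⟩⟩
  | succ n ih =>
    intro G hG
    have hGf : G.edgeFinset.card = n + 1 := (Set.ncard_eq_toFinset_card' G.edgeSet).symm.trans hG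
    have hne : G.edgeFinset.Nonempty := by rw [← Finset.card_pos, hGf]; omega
    obtain ⟨e, he⟩ := hne
    revert he
    induction e using Sym2.ind with
    | _ a b =>
    intro he
    have hab : G.Adj a b := mem_edgeFinset.mp he
    set G' := Gdel G a b with hG'
    have hedges : G'.edgeFinset = G.edgeFinset.erase s(a, b) := by
      ext f
      simp only [mem_edgeFinset, Finset.mem_erase, hG', Gdel, edgeSet_deleteEdges,
        Set.mem_diff, Set.mem_singleton_iff, and_comm]
    have hcard' : G'.edgeFinset.card = n := by
      rw [hedges, Finset.card_erase_of_mem he, hGf]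
      omega
    have hG'n : G'.edgeSet.ncard = n := (Set.ncard_eq_toFinset_card' G'.edgeSet).trans hcard'
    obtain ⟨ihle, ihiff⟩ := ih G' hG'n
    by_cases hr : G'.Reachable a b
    · have hcc := card_comps_del_nonbridge G a b hr
      rw [hcc] at ihle ihiff
      constructor
      · omega
      · constructor
        · intro hacyc
          exfalso
          have hbridge : G.IsBridge s(a, b) :=
            (isAcyclic_iff_forall_adj_isBridge.mp hacyc) hab
          exact (isBridge_iff.mp hbridge) hr
        · intro heq
          omega
    · have hcc := card_comps_del_bridge G a b hab hr
      rw [hcc] at ihle ihiff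
      constructor
      · omega
      · constructor
        · intro hacyc
          have := ihiff.mp (isAcyclic_mono (deleteEdges_le _) hacyc)
          omega
        · intro heq
          have hacyc' : G'.IsAcyclic := ihiff.mpr (by omega)
          intro v c hc
          by_cases hmem : s(a, b) ∈ c.edges
          · have hbridge : G.IsBridge s(a, b) := isBridge_iff.mpr hr
            exact ((isBridge_iff_forall_cycle_notMem hab).mp hbridge) c hc hmem
          · have htr : ∀ f ∈ c.edges, f ∈ G'.edgeSet := by
              intro f hf
              rw [hG', Gdel, edgeSet_deleteEdges]
              exact ⟨c.edges_subset_edgeSet hf, fun h => hmem (h ▸ hf)⟩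
            exact hacyc' (c.transfer G' htr) (hc.transfer htr)

lemma isAcyclic_card_count {G : SimpleGraph W} (h : G.IsAcyclic) :
    Nat.card W = Nat.card G.ConnectedComponent + G.edgeSet.ncard :=
  ((card_comps_add_edges_aux _ G rfl).2).mp h

lemma connected_card_comps {G : SimpleGraph W} (h : G.Connected) :
    Nat.card G.ConnectedComponent = 1 := by
  have hne : Nonempty G.ConnectedComponent := ⟨G.connectedComponentMk h.nonempty.some⟩
  have hsub : Subsingleton G.ConnectedComponent := by
    constructor
    intro c d
    induction c using SimpleGraph.ConnectedComponent.ind with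
    | _ x =>
    induction d using SimpleGraph.ConnectedComponent.ind with
    | _ y =>
    exact ConnectedComponent.sound (h.preconnected x y)
  exact Nat.card_unique

lemma isTree_of_connected_card {G : SimpleGraph W} (hc : G.Connected)
    (hcard : G.edgeSet.ncard + 1 = Nat.card W) : G.IsTree := by
  refine ⟨hc, ?_⟩
  refine ((card_comps_add_edges_aux _ G rfl).2).mpr ?_
  rw [connected_card_comps hc]
  omega

lemma tree_ncard {G : SimpleGraph W} (h : G.IsTree) :
    G.edgeSet.ncard + 1 = Nat.card W := by
  have h1 := h.card_edgeFinset
  have h2 : G.edgeSet.ncard = G.edgeFinset.card := Set.ncard_eq_toFinset_card' _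
  rw [Nat.card_eq_fintype_card]
  omega

lemma spanning_iff_card {A B : SimpleGraph W} (h : A ≤ B) :
    (∀ x y : W, B.Reachable x y → A.Reachable x y) ↔
      Nat.card A.ConnectedComponent = Nat.card B.ConnectedComponent := by
  constructor
  · intro hcond
    refine Nat.card_eq_of_bijective (psi h) ⟨?_, psi_surjective h⟩
    intro c1 c2 hle
    induction c1 using SimpleGraph.ConnectedComponent.ind with
    | _ x =>
    induction c2 using SimpleGraph.ConnectedComponent.ind with
    | _ y =>
    simp only [psi_mk, ConnectedComponent.eq] at hle
    exact ConnectedComponent.sound (hcond x y hle)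
  · intro hcard
    have hbij : Function.Bijective (psi h) :=
      (Nat.bijective_iff_surjective_and_card (psi h)).mpr ⟨psi_surjective h, hcard⟩
    intro x y hrB
    have : psi h (A.connectedComponentMk x) = psi h (A.connectedComponentMk y) := by
      simp only [psi_mk]
      exact ConnectedComponent.sound hrB
    exact ConnectedComponent.exact (hbij.1 this)

end counting

end ForestAux

namespace ForestAux

section hyper
variable {α β : Type} [DecidableEq α] [DecidableEq β]
variable (H : Hypergraph' α β) (E' : Finset β)

lemma bip_adj (x y : ↥H.V ⊕ ↥H.E) :
    H.Bip.Adj x y ↔ ∃ (v : ↥H.V) (e : ↥H.E),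
      ((x = Sum.inl v ∧ y = Sum.inr e) ∨ (x = Sum.inr e ∧ y = Sum.inl v)) ∧
        (v : α) ∈ H.incid (e : β) := by
  simp only [Hypergraph'.Bip, fromRel_adj]
  constructor
  · rintro ⟨hne, (⟨v, e, rfl, rfl, hm⟩ | ⟨v, e, rfl, rfl, hm⟩)⟩
    · exact ⟨v, e, Or.inl ⟨rfl, rfl⟩, hm⟩
    · exact ⟨v, e, Or.inr ⟨rfl, rfl⟩, hm⟩
  · rintro ⟨v, e, (⟨rfl, rfl⟩ | ⟨rfl, rfl⟩), hm⟩
    · exact ⟨by simp, Or.inl ⟨v, e, rfl, rfl, hm⟩⟩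
    · exact ⟨by simp, Or.inr ⟨v, e, rfl, rfl, hm⟩⟩

lemma bigRestrict_adj (x y : ↥H.V ⊕ ↥H.E) :
    (H.bigRestrict E').Adj x y ↔ ∃ (v : ↥H.V) (e : ↥H.E),
      ((x = Sum.inl v ∧ y = Sum.inr e) ∨ (x = Sum.inr e ∧ y = Sum.inl v)) ∧
        (e : β) ∈ E' ∧ (v : α) ∈ H.incid (e : β) := by
  simp only [Hypergraph'.bigRestrict, fromRel_adj]
  constructor
  · rintro ⟨hne, (⟨v, e, rfl, rfl, he, hm⟩ | ⟨v, e, rfl, rfl, he, hm⟩)⟩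
    · exact ⟨v, e, Or.inl ⟨rfl, rfl⟩, he, hm⟩
    · exact ⟨v, e, Or.inr ⟨rfl, rfl⟩, he, hm⟩
  · rintro ⟨v, e, (⟨rfl, rfl⟩ | ⟨rfl, rfl⟩), he, hm⟩
    · exact ⟨by simp, Or.inl ⟨v, e, rfl, rfl, he, hm⟩⟩
    · exact ⟨by simp, Or.inr ⟨v, e, rfl, rfl, he, hm⟩⟩

lemma bipOn_adj (x y : ↥(E'.biUnion H.incid) ⊕ ↥E') :
    (H.BipOn E').Adj x y ↔ ∃ (v : ↥(E'.biUnion H.incid)) (e : ↥E'),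
      ((x = Sum.inl v ∧ y = Sum.inr e) ∨ (x = Sum.inr e ∧ y = Sum.inl v)) ∧
        (v : α) ∈ H.incid (e : β) := by
  simp only [Hypergraph'.BipOn, fromRel_adj]
  constructor
  · rintro ⟨hne, (⟨v, e, rfl, rfl, hm⟩ | ⟨v, e, rfl, rfl, hm⟩)⟩
    · exact ⟨v, e, Or.inl ⟨rfl, rfl⟩, hm⟩
    · exact ⟨v, e, Or.inr ⟨rfl, rfl⟩, hm⟩
  · rintro ⟨v, e, (⟨rfl, rfl⟩ | ⟨rfl, rfl⟩), hm⟩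
    · exact ⟨by simp, Or.inl ⟨v, e, rfl, rfl, hm⟩⟩
    · exact ⟨by simp, Or.inr ⟨v, e, rfl, rfl, hm⟩⟩

lemma bigRestrict_le : H.bigRestrict E' ≤ H.Bip := by
  intro x y h
  rw [bigRestrict_adj] at h
  rw [bip_adj]
  obtain ⟨v, e, hor, _, hm⟩ := h
  exact ⟨v, e, hor, hm⟩

lemma not_adj_inr {e : ↥H.E} (he : (e : β) ∉ E') (x : ↥H.V ⊕ ↥H.E) :
    ¬ (H.bigRestrict E').Adj (Sum.inr e) x := by
  rw [bigRestrict_adj]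
  rintro ⟨v, e', (⟨h1, h2⟩ | ⟨h1, h2⟩), he', hm⟩
  · exact (Sum.inr_ne_inl h1)
  · rw [Sum.inr.injEq] at h1
    exact he (h1 ▸ he')

lemma not_adj_inl {v : ↥H.V} (hv : (v : α) ∉ E'.biUnion H.incid) (x : ↥H.V ⊕ ↥H.E) :
    ¬ (H.bigRestrict E').Adj (Sum.inl v) x := by
  rw [bigRestrict_adj]
  rintro ⟨v', e', (⟨h1, h2⟩ | ⟨h1, h2⟩), he', hm⟩
  · rw [Sum.inl.injEq] at h1
    exact hv (Finset.mem_biUnion.mpr ⟨↑e', he', h1 ▸ hm⟩)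
  · exact (Sum.inl_ne_inr h1)

lemma edge_shape {T : SimpleGraph (↥H.V ⊕ ↥H.E)} (hT : T ≤ H.Bip)
    {fe : Sym2 (↥H.V ⊕ ↥H.E)} (hfe : fe ∈ T.edgeSet) :
    ∃ (v : ↥H.V) (e : ↥H.E), fe = s(Sum.inl v, Sum.inr e) := by
  induction fe using Sym2.ind with
  | _ x y =>
  rw [mem_edgeSet] at hfe
  obtain ⟨v, e, (⟨rfl, rfl⟩ | ⟨rfl, rfl⟩), _⟩ := (bip_adj H x y).mp (hT hfe)
  · exact ⟨v, e, rfl⟩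
  · exact ⟨v, e, Sym2.eq_swap⟩

lemma degr_eq_degree {W : Type} [Fintype W] (T : SimpleGraph W) (x : W) :
    degr T x = T.degree x := by
  rw [degr, ← Nat.card_coe_set_eq, Nat.card_eq_fintype_card,
    card_neighborSet_eq_degree]

lemma card_edge_sum (T : SimpleGraph (↥H.V ⊕ ↥H.E)) (hT : T ≤ H.Bip) :
    T.edgeSet.ncard = ∑ e : ↥H.E, degr T (Sum.inr e) := by
  rw [Set.ncard_eq_toFinset_card' T.edgeSet]
  show T.edgeFinset.card = _
  rw [Finset.sum_congr rfl fun (e : ↥H.E) _ => degr_eq_degree T (Sum.inr e)]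
  have hcover : T.edgeFinset =
      Finset.univ.biUnion (fun e : ↥H.E => T.incidenceFinset (Sum.inr e)) := by
    ext fe
    simp only [mem_edgeFinset, Finset.mem_biUnion, Finset.mem_univ, true_and,
      mem_incidenceFinset, incidenceSet, Set.mem_setOf_eq]
    constructor
    · intro h
      obtain ⟨v, e, rfl⟩ := edge_shape H hT h
      exact ⟨e, h, by simp⟩
    · rintro ⟨e, hmem, _⟩
      exact hmem
  rw [hcover, Finset.card_biUnion]
  · exact Finset.sum_congr rfl fun e _ => T.card_incidenceFinset_eq_degree (Sum.inr e)
  · intro e _ e' _ hne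
    rw [Function.onFun, Finset.disjoint_left]
    intro fe h1 h2
    rw [mem_incidenceFinset] at h1 h2
    obtain ⟨v, e0, rfl⟩ := edge_shape H hT h1.1
    have he : e = e0 := by
      have := h1.2
      rw [Sym2.mem_iff] at this
      rcases this with h | h
      · exact absurd h (Sum.inr_ne_inl)
      · exact Sum.inr_injective h
    have he' : e' = e0 := by
      have := h2.2
      rw [Sym2.mem_iff] at this
      rcases this with h | h
      · exact absurd h (Sum.inr_ne_inl)
      · exact Sum.inr_injective h
    exact hne (he.trans he'.symm)

lemma degr_inf_restrict {Γ : SimpleGraph (↥H.V ⊕ ↥H.E)} (hΓ : Γ ≤ H.Bip)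
    {e : ↥H.E} (he : (e : β) ∈ E') :
    degr (Γ ⊓ H.bigRestrict E') (Sum.inr e) = degr Γ (Sum.inr e) := by
  have hset : (Γ ⊓ H.bigRestrict E').neighborSet (Sum.inr e) =
      Γ.neighborSet (Sum.inr e) := by
    ext x
    simp only [mem_neighborSet, inf_adj]
    refine ⟨fun h => h.1, fun h => ⟨h, ?_⟩⟩
    obtain ⟨v, e', (⟨h1, h2⟩ | ⟨h1, h2⟩), hm⟩ := (bip_adj H _ _).mp (hΓ h)
    · exact absurd h1 (Sum.inr_ne_inl)
    · obtain rfl : e = e' := Sum.inr_injective h1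
      subst h2
      rw [bigRestrict_adj]
      exact ⟨v, e, Or.inr ⟨rfl, rfl⟩, he, hm⟩
  rw [degr, degr, hset]

lemma degr_inf_restrict_zero {Γ : SimpleGraph (↥H.V ⊕ ↥H.E)}
    {e : ↥H.E} (he : (e : β) ∉ E') :
    degr (Γ ⊓ H.bigRestrict E') (Sum.inr e) = 0 := by
  have hset : (Γ ⊓ H.bigRestrict E').neighborSet (Sum.inr e) = ∅ := by
    ext x
    simp only [mem_neighborSet, inf_adj, Set.mem_empty_iff_false, iff_false, not_and]
    intro _
    exact not_adj_inr H E' he x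
  rw [degr, hset, Set.ncard_empty]

lemma reach_invariant {W : Type} {G : SimpleGraph W} {γ : Sort _} (f : W → γ)
    (h : ∀ a b, G.Adj a b → f a = f b) {a b : W} (hr : G.Reachable a b) : f a = f b := by
  obtain ⟨w⟩ := hr
  induction w with
  | nil => rfl
  | cons hadj p ih => exact (h _ _ hadj).trans ih

lemma biUnion_sub (hE'sub : E' ⊆ H.E) : E'.biUnion H.incid ⊆ H.V := by
  intro a ha
  rw [Finset.mem_biUnion] at ha
  obtain ⟨e, he, hm⟩ := ha
  exact H.incid_sub e (hE'sub he) hm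

def iota (hE'sub : E' ⊆ H.E) : (↥(E'.biUnion H.incid) ⊕ ↥E') → (↥H.V ⊕ ↥H.E)
  | Sum.inl v => Sum.inl ⟨v.1, biUnion_sub H E' hE'sub v.2⟩
  | Sum.inr e => Sum.inr ⟨e.1, hE'sub e.2⟩

lemma adj_iota (hE'sub : E' ⊆ H.E) {x y : ↥(E'.biUnion H.incid) ⊕ ↥E'}
    (h : (H.BipOn E').Adj x y) :
    (H.bigRestrict E').Adj (iota H E' hE'sub x) (iota H E' hE'sub y) := by
  rw [bipOn_adj] at h
  obtain ⟨v, e, (⟨rfl, rfl⟩ | ⟨rfl, rfl⟩), hm⟩ := h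
  · rw [bigRestrict_adj]
    exact ⟨⟨v.1, biUnion_sub H E' hE'sub v.2⟩, ⟨e.1, hE'sub e.2⟩, Or.inl ⟨rfl, rfl⟩, e.2, hm⟩
  · rw [bigRestrict_adj]
    exact ⟨⟨v.1, biUnion_sub H E' hE'sub v.2⟩, ⟨e.1, hE'sub e.2⟩, Or.inr ⟨rfl, rfl⟩, e.2, hm⟩

/-- Extra isolated vertices of the restricted graph. -/
def ExtraV : Type := {v : ↥H.V // (v : α) ∉ E'.biUnion H.incid} ⊕ {e : ↥H.E // (e : β) ∉ E'}

instance : Finite (ExtraV H E') :=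
  inferInstanceAs (Finite ({v : ↥H.V // (v : α) ∉ E'.biUnion H.incid}
    ⊕ {e : ↥H.E // (e : β) ∉ E'}))

def phiFun : (↥H.V ⊕ ↥H.E) → ((H.BipOn E').ConnectedComponent ⊕ ExtraV H E')
  | Sum.inl v =>
      if h : (v : α) ∈ E'.biUnion H.incid then
        Sum.inl ((H.BipOn E').connectedComponentMk (Sum.inl ⟨↑v, h⟩))
      else Sum.inr (Sum.inl ⟨v, h⟩)
  | Sum.inr e =>
      if h : (e : β) ∈ E' then
        Sum.inl ((H.BipOn E').connectedComponentMk (Sum.inr ⟨↑e, h⟩))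
      else Sum.inr (Sum.inr ⟨e, h⟩)

lemma phiFun_adj {a b : ↥H.V ⊕ ↥H.E} (h : (H.bigRestrict E').Adj a b) :
    phiFun H E' a = phiFun H E' b := by
  rw [bigRestrict_adj] at h
  have key : ∀ (v : ↥H.V) (e : ↥H.E), (e : β) ∈ E' → (v : α) ∈ H.incid (e : β) →
      phiFun H E' (Sum.inl v) = phiFun H E' (Sum.inr e) := by
    intro v e he hm
    have hv : (v : α) ∈ E'.biUnion H.incid := Finset.mem_biUnion.mpr ⟨↑e, he, hm⟩
    simp only [phiFun, dif_pos hv, dif_pos he, Sum.inl.injEq]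
    apply ConnectedComponent.sound
    apply Adj.reachable
    rw [bipOn_adj]
    exact ⟨⟨↑v, hv⟩, ⟨↑e, he⟩, Or.inl ⟨rfl, rfl⟩, hm⟩
  obtain ⟨v, e, (⟨rfl, rfl⟩ | ⟨rfl, rfl⟩), he, hm⟩ := h
  · exact key v e he hm
  · exact (key v e he hm).symm

def PhiC : (H.bigRestrict E').ConnectedComponent →
    ((H.BipOn E').ConnectedComponent ⊕ ExtraV H E') :=
  ConnectedComponent.lift (phiFun H E')
    (fun _ _ p _ => reach_invariant _ (fun _ _ hab => phiFun_adj H E' hab) ⟨p⟩)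

def PsiC (hE'sub : E' ⊆ H.E) :
    ((H.BipOn E').ConnectedComponent ⊕ ExtraV H E') → (H.bigRestrict E').ConnectedComponent
  | Sum.inl c => c.lift (fun x => (H.bigRestrict E').connectedComponentMk (iota H E' hE'sub x))
      (fun _ _ p _ => reach_invariant _
        (fun _ _ hab => ConnectedComponent.sound (adj_iota H E' hE'sub hab).reachable) ⟨p⟩)
  | Sum.inr (Sum.inl v) => (H.bigRestrict E').connectedComponentMk (Sum.inl v.1)
  | Sum.inr (Sum.inr e) => (H.bigRestrict E').connectedComponentMk (Sum.inr e.1)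

lemma PhiC_bijective (hE'sub : E' ⊆ H.E) : Function.Bijective (PhiC H E') := by
  have hleft : Function.LeftInverse (PsiC H E' hE'sub) (PhiC H E') := by
    intro c
    induction c using SimpleGraph.ConnectedComponent.ind with
    | _ x =>
    cases x with
    | inl v =>
      show PsiC H E' hE'sub (phiFun H E' (Sum.inl v)) = _
      by_cases h : (v : α) ∈ E'.biUnion H.incid
      · simp only [phiFun, dif_pos h, PsiC, ConnectedComponent.lift_mk, iota]
      · simp only [phiFun, dif_neg h, PsiC]
    | inr e =>
      show PsiC H E' hE'sub (phiFun H E' (Sum.inr e)) = _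
      by_cases h : (e : β) ∈ E'
      · simp only [phiFun, dif_pos h, PsiC, ConnectedComponent.lift_mk, iota]
      · simp only [phiFun, dif_neg h, PsiC]
  have hright : Function.RightInverse (PsiC H E' hE'sub) (PhiC H E') := by
    rintro (c | (v | e))
    · induction c using SimpleGraph.ConnectedComponent.ind with
      | _ x =>
      cases x with
      | inl v =>
        show PhiC H E' ((H.bigRestrict E').connectedComponentMk (iota H E' hE'sub (Sum.inl v))) = _
        show phiFun H E' (Sum.inl ⟨↑v, biUnion_sub H E' hE'sub v.2⟩) = _
        simp only [phiFun, dif_pos v.2]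
      | inr e =>
        show PhiC H E' ((H.bigRestrict E').connectedComponentMk (iota H E' hE'sub (Sum.inr e))) = _
        show phiFun H E' (Sum.inr ⟨↑e, hE'sub e.2⟩) = _
        simp only [phiFun, dif_pos e.2]
    · show phiFun H E' (Sum.inl v.1) = _
      simp only [phiFun, dif_neg v.2]
    · show phiFun H E' (Sum.inr e.1) = _
      simp only [phiFun, dif_neg e.2]
  exact ⟨hleft.injective, hright.surjective⟩

lemma card_comps_bigRestrict (hE'sub : E' ⊆ H.E) :
    Nat.card (H.bigRestrict E').ConnectedComponent + (E'.biUnion H.incid).card + E'.card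
      = H.compCount E' + H.V.card + H.E.card := by
  have h1 : Nat.card (H.bigRestrict E').ConnectedComponent =
      Nat.card ((H.BipOn E').ConnectedComponent ⊕ ExtraV H E') :=
    Nat.card_eq_of_bijective _ (PhiC_bijective H E' hE'sub)
  have h2 : Nat.card ((H.BipOn E').ConnectedComponent ⊕ ExtraV H E') =
      H.compCount E' + Nat.card (ExtraV H E') := by
    rw [Nat.card_sum]; rfl
  have h3 : Nat.card (ExtraV H E') =
      Nat.card {v : ↥H.V // (v : α) ∉ E'.biUnion H.incid}
        + Nat.card {e : ↥H.E // (e : β) ∉ E'} := by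
    rw [ExtraV, Nat.card_sum]
  have e1 : {v : ↥H.V // (v : α) ∈ E'.biUnion H.incid} ≃ ↥(E'.biUnion H.incid) :=
    ⟨fun x => ⟨x.1.1, x.2⟩, fun y => ⟨⟨y.1, biUnion_sub H E' hE'sub y.2⟩, y.2⟩,
      fun x => by ext; rfl, fun y => by ext; rfl⟩
  have e2 : {e : ↥H.E // (e : β) ∈ E'} ≃ ↥E' :=
    ⟨fun x => ⟨x.1.1, x.2⟩, fun y => ⟨⟨y.1, hE'sub y.2⟩, y.2⟩,
      fun x => by ext; rfl, fun y => by ext; rfl⟩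
  have c1 : Nat.card {v : ↥H.V // (v : α) ∉ E'.biUnion H.incid}
      + (E'.biUnion H.incid).card = H.V.card := by
    rw [Nat.card_eq_fintype_card, Fintype.card_subtype_compl]
    have := Fintype.card_congr e1
    rw [Fintype.card_coe] at this ⊢
    have hle : Fintype.card {v : ↥H.V // (v : α) ∈ E'.biUnion H.incid}
        ≤ Fintype.card ↥H.V := Fintype.card_subtype_le _
    rw [Fintype.card_coe] at hle
    omega
  have c2 : Nat.card {e : ↥H.E // (e : β) ∉ E'} + E'.card = H.E.card := by
    rw [Nat.card_eq_fintype_card, Fintype.card_subtype_compl]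
    have := Fintype.card_congr e2
    rw [Fintype.card_coe] at this ⊢
    have hle : Fintype.card {e : ↥H.E // (e : β) ∈ E'}
        ≤ Fintype.card ↥H.E := Fintype.card_subtype_le _
    rw [Fintype.card_coe] at hle
    omega
  omega

end hyper
end ForestAux

/-- forest exchange lemma. -/
theorem forest_exchange (H : Hypergraph' α β) (hconn : H.Bip.Connected)
    (Γ : SimpleGraph (↥H.V ⊕ ↥H.E)) (f : β → ℕ) (hreal : H.Realizes Γ f)
    (E' : Finset β) (hE'sub : E' ⊆ H.E) (hE'ne : E'.Nonempty) :
    ((∑ e ∈ E', (f e : ℤ)) = H.mu E' ↔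
      IsSpanningForest (H.bigRestrict E') (Γ ⊓ H.bigRestrict E')) ∧
    (∀ F : SimpleGraph (↥H.V ⊕ ↥H.E),
      (∑ e ∈ E', (f e : ℤ)) = H.mu E' →
      IsSpanningForest (H.bigRestrict E') F →
      ∃ g : β → ℕ, H.Realizes ((Γ \ H.bigRestrict E') ⊔ F) g ∧
        ∀ e ∈ H.E, e ∉ E' → g e = f e) := by
  classical
  obtain ⟨⟨hΓle, hΓtree⟩, hf0, hdeg⟩ := hreal
  have hRle : H.bigRestrict E' ≤ H.Bip := ForestAux.bigRestrict_le H E'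
  have hinfle : Γ ⊓ H.bigRestrict E' ≤ H.Bip := le_trans inf_le_left hΓle
  have hsum_edges : (Γ ⊓ H.bigRestrict E').edgeSet.ncard = (∑ e ∈ E', f e) + E'.card := by
    rw [ForestAux.card_edge_sum H _ hinfle]
    have hdeq : ∀ e : ↥H.E, degr (Γ ⊓ H.bigRestrict E') (Sum.inr e)
        = if (e : β) ∈ E' then f ↑e + 1 else 0 := by
      intro e
      by_cases h : (e : β) ∈ E'
      · rw [if_pos h, ForestAux.degr_inf_restrict H E' hΓle h, hdeg e]
      · rw [if_neg h, ForestAux.degr_inf_restrict_zero H E' h]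
    rw [Finset.sum_congr rfl fun (e : ↥H.E) _ => hdeq e]
    rw [Finset.sum_coe_sort H.E (fun x => if x ∈ E' then f x + 1 else 0)]
    rw [Finset.sum_ite_mem, Finset.inter_eq_right.mpr hE'sub]
    rw [Finset.sum_add_distrib, Finset.sum_const, smul_eq_mul, mul_one]
  have hn : Nat.card (↥H.V ⊕ ↥H.E) = H.V.card + H.E.card := by
    rw [Nat.card_eq_fintype_card, Fintype.card_sum, Fintype.card_coe, Fintype.card_coe]
  have hcomp4 := ForestAux.card_comps_bigRestrict H E' hE'sub
  have hacyc : (Γ ⊓ H.bigRestrict E').IsAcyclic :=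
    ForestAux.isAcyclic_mono inf_le_left hΓtree.IsAcyclic
  have hcount := ForestAux.isAcyclic_card_count hacyc
  have hΓedges : Γ.edgeSet.ncard + 1 = Nat.card (↥H.V ⊕ ↥H.E) :=
    ForestAux.tree_ncard hΓtree
  have hmu : H.mu E' = ((E'.biUnion H.incid).card : ℤ) - (H.compCount E' : ℤ) := rfl
  have hcast : (∑ e ∈ E', (f e : ℤ)) = ((∑ e ∈ E', f e : ℕ) : ℤ) := by push_cast; rfl
  have keyiff : ((∑ e ∈ E', (f e : ℤ)) = H.mu E') ↔
      Nat.card (Γ ⊓ H.bigRestrict E').ConnectedComponent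
        = Nat.card (H.bigRestrict E').ConnectedComponent := by
    rw [hcast, hmu]
    constructor <;> intro h <;> omega
  have sf_iff : IsSpanningForest (H.bigRestrict E') (Γ ⊓ H.bigRestrict E') ↔
      Nat.card (Γ ⊓ H.bigRestrict E').ConnectedComponent
        = Nat.card (H.bigRestrict E').ConnectedComponent := by
    constructor
    · intro h
      exact (ForestAux.spanning_iff_card inf_le_right).mp h.2.2
    · intro h
      exact ⟨inf_le_right, hacyc, (ForestAux.spanning_iff_card inf_le_right).mpr h⟩
  refine ⟨keyiff.trans sf_iff.symm, ?_⟩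
  intro F hsum hF
  have hFR : F ≤ H.bigRestrict E' := hF.1
  have hFacyc : F.IsAcyclic := hF.2.1
  have hcompF : Nat.card F.ConnectedComponent
      = Nat.card (H.bigRestrict E').ConnectedComponent :=
    (ForestAux.spanning_iff_card hFR).mp hF.2.2
  have hcountF := ForestAux.isAcyclic_card_count hFacyc
  have hcompΓ' := keyiff.mp hsum
  have hΓ''le : (Γ \ H.bigRestrict E') ⊔ F ≤ H.Bip :=
    sup_le (le_trans sdiff_le hΓle) (le_trans hFR hRle)
  have hconn'' : ((Γ \ H.bigRestrict E') ⊔ F).Connected := by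
    haveI : Nonempty (↥H.V ⊕ ↥H.E) := hΓtree.isConnected.nonempty
    apply Connected.mk
    intro x y
    have hxy : Γ.Reachable x y := hΓtree.isConnected.preconnected x y
    refine ForestAux.reach_of_adj_imp (fun u v huv => ?_) hxy
    by_cases hR' : (H.bigRestrict E').Adj u v
    · exact (hF.2.2 u v hR'.reachable).mono le_sup_right
    · exact ((sup_adj _ _ _ _).mpr (Or.inl ((sdiff_adj _ _ _ _).mpr ⟨huv, hR'⟩))).reachable
  have hdisjE : Disjoint (Γ \ H.bigRestrict E').edgeSet F.edgeSet := by
    rw [Set.disjoint_left]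
    intro fe h1 h2
    rw [edgeSet_sdiff] at h1
    exact h1.2 (edgeSet_mono hFR h2)
  have hcard'' : ((Γ \ H.bigRestrict E') ⊔ F).edgeSet.ncard
      = (Γ \ H.bigRestrict E').edgeSet.ncard + F.edgeSet.ncard := by
    rw [edgeSet_sup]
    exact Set.ncard_union_eq hdisjE (Set.toFinite _) (Set.toFinite _)
  have hsplit : (Γ \ H.bigRestrict E').edgeSet.ncard
      + (Γ ⊓ H.bigRestrict E').edgeSet.ncard = Γ.edgeSet.ncard := by
    rw [edgeSet_sdiff, edgeSet_inf]
    rw [← Set.ncard_union_eq Set.disjoint_sdiff_inter (Set.toFinite _) (Set.toFinite _)]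
    rw [Set.diff_union_inter]
  have htree'' : ((Γ \ H.bigRestrict E') ⊔ F).IsTree :=
    ForestAux.isTree_of_connected_card hconn'' (by omega)
  obtain ⟨e0, he0⟩ := hE'ne
  obtain ⟨v0, hv0⟩ := H.incid_nonempty e0 (hE'sub he0)
  have hv0V : v0 ∈ H.V := H.incid_sub e0 (hE'sub he0) hv0
  have hdegpos : ∀ e : ↥H.E, 0 < degr ((Γ \ H.bigRestrict E') ⊔ F) (Sum.inr e) := by
    intro e
    obtain ⟨w⟩ := hconn''.preconnected (Sum.inr e) (Sum.inl ⟨v0, hv0V⟩)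
    cases w with
    | cons hadj p =>
      rw [degr]
      exact (Set.ncard_pos (Set.toFinite _)).mpr ⟨_, hadj⟩
  refine ⟨fun x => if hx : x ∈ H.E
        then degr ((Γ \ H.bigRestrict E') ⊔ F) (Sum.inr ⟨x, hx⟩) - 1 else 0,
      ⟨⟨hΓ''le, htree''⟩, ?_, ?_⟩, ?_⟩
  · intro e he
    exact dif_neg he
  · intro e
    have hb : (fun x => if hx : x ∈ H.E
          then degr ((Γ \ H.bigRestrict E') ⊔ F) (Sum.inr ⟨x, hx⟩) - 1 else 0) (↑e : β)
        = degr ((Γ \ H.bigRestrict E') ⊔ F) (Sum.inr e) - 1 := dif_pos e.2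
    rw [hb]
    have := hdegpos e
    omega
  · intro e heE henot
    have hb : (fun x => if hx : x ∈ H.E
          then degr ((Γ \ H.bigRestrict E') ⊔ F) (Sum.inr ⟨x, hx⟩) - 1 else 0) e
        = degr ((Γ \ H.bigRestrict E') ⊔ F) (Sum.inr ⟨e, heE⟩) - 1 := dif_pos heE
    rw [hb]
    have hset : ((Γ \ H.bigRestrict E') ⊔ F).neighborSet (Sum.inr ⟨e, heE⟩)
        = Γ.neighborSet (Sum.inr ⟨e, heE⟩) := by
      ext x
      simp only [mem_neighborSet, sup_adj, sdiff_adj]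
      constructor
      · rintro (⟨h1, _⟩ | h1)
        · exact h1
        · exact absurd (hFR h1) (ForestAux.not_adj_inr H E' henot x)
      · intro h1
        exact Or.inl ⟨h1, ForestAux.not_adj_inr H E' henot x⟩
    have hdg : degr ((Γ \ H.bigRestrict E') ⊔ F) (Sum.inr ⟨e, heE⟩)
        = degr Γ (Sum.inr ⟨e, heE⟩) := by
      rw [degr, degr, hset]
    rw [hdg, hdeg ⟨e, heE⟩]
    show f e + 1 - 1 = f e
    omega
end
end
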